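/- arXiv:0904.0073 — 7 statements merged into one kernel-verified Lean document; each statement's English description precedes it below -/
import Mathlib

section
/- Every bounded-above nonempty subset of the half-open long line L₊ has a least upper bound in L₊ (i.e., L₊ is conditionally complete). -/
/-- The set of countable ordinals (ordinals less than the first uncountable ordinal `ω₁`). -/
def SOmega : Type 1 := Set.Iio (Cardinal.aleph 1).ord

noncomputable instance : LinearOrder SOmega :=
  inferInstanceAs (LinearOrder (Set.Iio (Cardinal.aleph 1).ord))

/-- The half-open long line `L₊ = [0,1) × S_Ω` with the lexicographic order
(ordinal coordinate first, then the real coordinate). -/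
def LongLinePlus : Type 1 := SOmega ×ₗ (Set.Ico (0:ℝ) 1)

noncomputable instance : LinearOrder LongLinePlus :=
  inferInstanceAs (LinearOrder (SOmega ×ₗ (Set.Ico (0:ℝ) 1)))

/-- `L₊` carries the order topology. -/
noncomputable instance : TopologicalSpace LongLinePlus := Preorder.topology LongLinePlus
instance : OrderTopology LongLinePlus := ⟨rfl⟩

namespace LLPaux

def ord (p : LongLinePlus) : Ordinal := ((ofLex p).1 : Set.Iio (Cardinal.aleph 1).ord).1
def re (p : LongLinePlus) : ℝ := ((ofLex p).2 : Set.Ico (0:ℝ) 1).1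
lemma ord_lt (p : LongLinePlus) : ord p < (Cardinal.aleph 1).ord :=
  ((ofLex p).1 : Set.Iio (Cardinal.aleph 1).ord).2
lemma re_mem (p : LongLinePlus) : re p ∈ Set.Ico (0:ℝ) 1 :=
  ((ofLex p).2 : Set.Ico (0:ℝ) 1).2

def mk (o : Ordinal) (h : o < (Cardinal.aleph 1).ord) (x : ℝ) (hx : x ∈ Set.Ico (0:ℝ) 1) :
    LongLinePlus :=
  toLex ((⟨o, h⟩ : Set.Iio (Cardinal.aleph 1).ord), (⟨x, hx⟩ : Set.Ico (0:ℝ) 1))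

@[simp] lemma ord_mk (o h x hx) : ord (mk o h x hx) = o := rfl
@[simp] lemma re_mk (o h x hx) : re (mk o h x hx) = x := rfl

lemma le_iff (p q : LongLinePlus) :
    p ≤ q ↔ ord p < ord q ∨ (ord p = ord q ∧ re p ≤ re q) := by
  refine Iff.trans (show p ≤ q ↔ _ from Prod.Lex.le_iff (x := p) (y := q)) ?_
  exact or_congr (Iff.symm Subtype.coe_lt_coe) (and_congr Subtype.ext_iff Iff.rfl)

end LLPaux

/-- Every nonempty bounded-above subset of `L₊` has a least upper bound. -/
theorem longLinePlus_exists_isLUB (s : Set LongLinePlus) (hne : s.Nonempty)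
    (hbdd : BddAbove s) : ∃ b : LongLinePlus, IsLUB s b := by
  classical
  open LLPaux in
  obtain ⟨u, hu⟩ := hbdd
  set A : Set Ordinal := LLPaux.ord '' s with hA
  have hAne : A.Nonempty := hne.image _
  have hle_ord : ∀ p ∈ s, LLPaux.ord p ≤ LLPaux.ord u := by
    intro p hp
    rcases (LLPaux.le_iff p u).mp (hu hp) with h | h
    · exact h.le
    · exact h.1.le
  have hAbdd : BddAbove A := ⟨LLPaux.ord u, by rintro _ ⟨p, hp, rfl⟩; exact hle_ord p hp⟩
  set α := sSup A with hα
  have hαub : ∀ p ∈ s, LLPaux.ord p ≤ α := fun p hp => le_csSup hAbdd ⟨p, hp, rfl⟩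
  have hα1 : α < (Cardinal.aleph 1).ord :=
    lt_of_le_of_lt (csSup_le hAne (by rintro _ ⟨p, hp, rfl⟩; exact hle_ord p hp))
      (LLPaux.ord_lt u)
  set T : Set ℝ := LLPaux.re '' {p ∈ s | LLPaux.ord p = α} with hTdef
  by_cases hT : T.Nonempty
  · set t := sSup T with ht
    have hT01 : ∀ x ∈ T, x ∈ Set.Ico (0:ℝ) 1 := by
      rintro _ ⟨p, hp, rfl⟩; exact LLPaux.re_mem p
    have hTbdd : BddAbove T := ⟨1, fun x hx => (hT01 x hx).2.le⟩
    obtain ⟨x₀, hx₀⟩ := hT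
    have ht0 : (0:ℝ) ≤ t := (hT01 x₀ hx₀).1.trans (le_csSup hTbdd hx₀)
    have ht1 : t ≤ 1 := csSup_le ⟨x₀, hx₀⟩ fun x hx => (hT01 x hx).2.le
    by_cases htlt : t < 1
    · refine ⟨LLPaux.mk α hα1 t (Set.mem_Ico.mpr ⟨ht0, htlt⟩), ?_, ?_⟩
      · intro p hp
        rw [LLPaux.le_iff]
        rcases lt_or_eq_of_le (hαub p hp) with h | h
        · exact Or.inl (by simpa using h)
        · exact Or.inr ⟨by simpa using h, by simpa using le_csSup hTbdd ⟨p, ⟨hp, h⟩, rfl⟩⟩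
      · intro b hb
        obtain ⟨p₁, ⟨hp₁s, hp₁α⟩, -⟩ := id hx₀
        have hb₁ := (LLPaux.le_iff p₁ b).mp (hb hp₁s)
        rw [LLPaux.le_iff]
        rcases hb₁ with h | h
        · exact Or.inl (by simpa [hp₁α] using h)
        · have hαb : α = LLPaux.ord b := hp₁α ▸ h.1
          refine Or.inr ⟨by simpa using hαb, ?_⟩
          simp only [re_mk]
          refine csSup_le ⟨x₀, hx₀⟩ ?_
          rintro _ ⟨p, ⟨hps, hpα⟩, rfl⟩
          rcases (LLPaux.le_iff p b).mp (hb hps) with h' | h'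
          · exact absurd h' (by rw [hpα, hαb]; exact lt_irrefl _)
          · exact h'.2
    · have ht1' : t = 1 := le_antisymm ht1 (not_lt.mp htlt)
      have hlim : Order.IsSuccLimit ((Cardinal.aleph 1).ord) :=
        Cardinal.isSuccLimit_ord (Cardinal.aleph0_le_aleph 1)
      have hsucc : α + 1 < (Cardinal.aleph 1).ord := by
        rw [Ordinal.add_one_eq_succ]
        exact hlim.succ_lt hα1
      refine ⟨LLPaux.mk (α + 1) hsucc 0 (Set.mem_Ico.mpr ⟨le_refl 0, one_pos⟩), ?_, ?_⟩
      · intro p hp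
        rw [LLPaux.le_iff]
        exact Or.inl (by simpa using lt_of_le_of_lt (hαub p hp) (lt_add_one α))
      · intro b hb
        have hbα : α ≤ LLPaux.ord b := by
          obtain ⟨p₁, ⟨hp₁s, hp₁α⟩, _⟩ := hx₀
          have := (LLPaux.le_iff p₁ b).mp (hb hp₁s)
          rcases this with h | h
          · exact (hp₁α ▸ h.le)
          · exact hp₁α ▸ h.1.le
        have hbαlt : α < LLPaux.ord b := by
          rcases lt_or_eq_of_le hbα with h | h
          · exact h
          · exfalso
            have hub : ∀ x ∈ T, x ≤ LLPaux.re b := by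
              rintro _ ⟨p, ⟨hps, hpα⟩, rfl⟩
              rcases (LLPaux.le_iff p b).mp (hb hps) with h' | h'
              · exact absurd h' (by rw [hpα, ← h]; exact lt_irrefl _)
              · exact h'.2
            have : t ≤ LLPaux.re b := csSup_le ⟨x₀, hx₀⟩ hub
            have := lt_of_le_of_lt (ht1' ▸ this) (LLPaux.re_mem b).2
            exact lt_irrefl _ this
        rw [LLPaux.le_iff]
        have : α + 1 ≤ LLPaux.ord b := by
          rw [Ordinal.add_one_eq_succ]; exact Order.succ_le_of_lt hbαlt
        rcases lt_or_eq_of_le this with h | h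
        · exact Or.inl (by simpa using h)
        · exact Or.inr ⟨by simpa using h, by simpa using (LLPaux.re_mem b).1⟩
  · refine ⟨LLPaux.mk α hα1 0 (Set.mem_Ico.mpr ⟨le_refl 0, one_pos⟩), ?_, ?_⟩
    · intro p hp
      rw [LLPaux.le_iff]
      refine Or.inl ?_
      simp only [ord_mk]
      rcases lt_or_eq_of_le (hαub p hp) with h | h
      · exact h
      · exact absurd ⟨LLPaux.re p, ⟨p, ⟨hp, h⟩, rfl⟩⟩ hT
    · intro b hb
      have hbα : α ≤ LLPaux.ord b := by
        refine csSup_le hAne ?_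
        rintro _ ⟨p, hp, rfl⟩
        rcases (LLPaux.le_iff p b).mp (hb hp) with h | h
        · exact h.le
        · exact h.1.le
      rw [LLPaux.le_iff]
      rcases lt_or_eq_of_le hbα with h | h
      · exact Or.inl (by simpa using h)
      · exact Or.inr ⟨by simpa using h, by simpa using (LLPaux.re_mem b).1⟩
end

section
/- Every continuous function f : L₊ × L₊ → ℝ is constant on a tail square: there exists μ ∈ L₊ such that f is constant on the set {(x,y) : x > μ, y > μ}. -/
namespace LLPaux

open Filter Topology

noncomputable section

abbrev ω₁ : Ordinal := (Cardinal.aleph 1).ord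

lemma omega1_isLimit : Order.IsSuccLimit ω₁ :=
  Cardinal.isSuccLimit_ord (Cardinal.aleph0_le_aleph 1)

def zeroI : Set.Ico (0:ℝ) 1 := ⟨0, by norm_num⟩

/-- embed an ordinal level into the long line -/
def ι (s : SOmega) : LongLinePlus := toLex (s, zeroI)

/-- ordinal part -/
def π (x : LongLinePlus) : SOmega := (ofLex (show SOmega ×ₗ (Set.Ico (0:ℝ) 1) from x)).1

lemma lt_def (x y : LongLinePlus) :
    x < y ↔ (π x < π y ∨ (π x = π y ∧
      (ofLex (show SOmega ×ₗ (Set.Ico (0:ℝ) 1) from x)).2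
        < (ofLex (show SOmega ×ₗ (Set.Ico (0:ℝ) 1) from y)).2)) :=
  Prod.Lex.lt_iff

lemma lt_iota_iff (x : LongLinePlus) (s : SOmega) : x < ι s ↔ π x < s := by
  rw [lt_def]
  constructor
  · rintro (h | ⟨h1, h2⟩)
    · exact h
    · exact absurd h2 (by exact not_lt.2 (by exact_mod_cast (ofLex (show SOmega ×ₗ (Set.Ico (0:ℝ) 1) from x)).2.2.1))
  · exact Or.inl

lemma iota_lt_of_pi_lt {s : SOmega} {x : LongLinePlus} (h : s < π x) : ι s < x := by
  rw [lt_def]; exact Or.inl h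

lemma pi_le_of_iota_le {s : SOmega} {x : LongLinePlus} (h : ι s ≤ x) : s ≤ π x := by
  by_contra hc
  exact absurd ((lt_iota_iff x s).2 (not_le.1 hc)) (not_lt.2 h)

lemma iota_mono {s t : SOmega} (h : s ≤ t) : ι s ≤ ι t := by
  rcases lt_or_eq_of_le h with h | h
  · exact le_of_lt (iota_lt_of_pi_lt h)
  · exact le_of_eq (by rw [h])

lemma pi_lt_omega1 (x : LongLinePlus) : (π x).1 < ω₁ := (π x).2

end
end LLPaux

namespace LLPaux
open Filter Topology
noncomputable section

lemma exists_bound_strict (g : ℕ → SOmega) : ∃ s : SOmega, ∀ n, g n < s := by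
  have hb : ∀ n, (g n).1 + 1 < ω₁ := fun n => by
    rw [Ordinal.add_one_eq_succ]; exact omega1_isLimit.succ_lt (g n).2
  have ho : (⨆ n, (g n).1 + 1) < ω₁ := by
    apply Ordinal.iSup_lt_ord _ hb
    rw [Cardinal.isRegular_aleph_one.cof_eq]
    simpa using Cardinal.aleph0_lt_aleph_one
  refine ⟨⟨_, ho⟩, fun n => ?_⟩
  have h1 : (g n).1 < (g n).1 + 1 := by
    rw [Ordinal.add_one_eq_succ]; exact Order.lt_succ _
  exact Subtype.coe_lt_coe.1 (lt_of_lt_of_le h1 (Ordinal.le_iSup _ n))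

lemma exists_gt5 (a b c d e : SOmega) : ∃ s, a < s ∧ b < s ∧ c < s ∧ d < s ∧ e < s := by
  obtain ⟨s, hs⟩ := exists_bound_strict (fun n => [a,b,c,d,e].getD n a)
  exact ⟨s, hs 0, hs 1, hs 2, hs 3, hs 4⟩

lemma key (f : LongLinePlus × LongLinePlus → ℝ) (hf : Continuous f) {ε : ℝ} (hε : 0 < ε) :
    ∃ μ : LongLinePlus, ∀ p q : LongLinePlus × LongLinePlus,
      μ < p.1 → μ < p.2 → μ < q.1 → μ < q.2 → |f p - f q| ≤ ε := by
  by_contra hcon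
  push_neg at hcon
  choose P Q h1 h2 h3 h4 h5 using hcon
  choose next hn1 hn2 hn3 hn4 hn5 using
    fun μ => exists_gt5 (π μ) (π (P μ).1) (π (P μ).2) (π (Q μ).1) (π (Q μ).2)
  set β : ℕ → SOmega :=
    fun n => Nat.recAux (⟨0, omega1_isLimit.pos⟩ : SOmega) (fun _ s => next (ι s)) n with hβ
  have hβsucc : ∀ n, β (n+1) = next (ι (β n)) := fun n => rfl
  have hβmono : StrictMono β := strictMono_nat_of_lt_succ (fun n => by
    rw [hβsucc]; exact hn1 (ι (β n)))
  have hlt : ∀ n, (β n).1 < ω₁ := fun n => (β n).2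
  have ho : (⨆ n, (β n).1) < ω₁ := by
    apply Ordinal.iSup_lt_ord _ hlt
    rw [Cardinal.isRegular_aleph_one.cof_eq]
    simpa using Cardinal.aleph0_lt_aleph_one
  set Λ : LongLinePlus := ι ⟨_, ho⟩ with hΛ
  have hβle : ∀ n, β n ≤ (⟨_, ho⟩ : SOmega) :=
    fun n => Subtype.coe_le_coe.1 (Ordinal.le_iSup _ n)
  -- a convergence criterion
  have hconv : ∀ c : ℕ → LongLinePlus, (∀ n, ι (β n) < c n) → (∀ n, π (c n) < β (n+1)) →
      Tendsto c atTop (𝓝 Λ) := by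
    intro c hlow hup
    rw [tendsto_order]
    constructor
    · intro a ha
      have h1' : (π a).1 < ⨆ n, (β n).1 := Subtype.coe_lt_coe.2 ((lt_iota_iff a _).1 ha)
      obtain ⟨n, hn⟩ := Ordinal.lt_iSup_iff.1 h1'
      refine eventually_atTop.2 ⟨n, fun m hm => ?_⟩
      have hab : π a < β m :=
        Subtype.coe_lt_coe.1 (lt_of_lt_of_le hn (Subtype.coe_le_coe.2 (hβmono.monotone hm)))
      exact lt_trans ((lt_iota_iff a (β m)).2 hab) (hlow m)
    · intro b hb
      refine Eventually.of_forall fun n => ?_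
      have h2' : c n < ι (β (n+1)) := (lt_iota_iff _ _).2 (hup n)
      exact lt_of_lt_of_le h2' ((iota_mono (hβle (n+1))).trans hb.le)
  have hP1 : Tendsto (fun n => (P (ι (β n))).1) atTop (𝓝 Λ) :=
    hconv _ (fun n => h1 (ι (β n))) (fun n => by rw [hβsucc]; exact hn2 (ι (β n)))
  have hP2 : Tendsto (fun n => (P (ι (β n))).2) atTop (𝓝 Λ) :=
    hconv _ (fun n => h2 (ι (β n))) (fun n => by rw [hβsucc]; exact hn3 (ι (β n)))
  have hQ1 : Tendsto (fun n => (Q (ι (β n))).1) atTop (𝓝 Λ) :=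
    hconv _ (fun n => h3 (ι (β n))) (fun n => by rw [hβsucc]; exact hn4 (ι (β n)))
  have hQ2 : Tendsto (fun n => (Q (ι (β n))).2) atTop (𝓝 Λ) :=
    hconv _ (fun n => h4 (ι (β n))) (fun n => by rw [hβsucc]; exact hn5 (ι (β n)))
  have hP : Tendsto (fun n => P (ι (β n))) atTop (𝓝 (Λ, Λ)) := by
    simpa using hP1.prodMk_nhds hP2
  have hQ : Tendsto (fun n => Q (ι (β n))) atTop (𝓝 (Λ, Λ)) := by
    simpa using hQ1.prodMk_nhds hQ2
  have hfP := (hf.tendsto (Λ, Λ)).comp hP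
  have hfQ := (hf.tendsto (Λ, Λ)).comp hQ
  have hd : Tendsto (fun n => f (P (ι (β n))) - f (Q (ι (β n)))) atTop (𝓝 0) := by
    simpa using hfP.sub hfQ
  have hev : ∀ᶠ n in atTop, |f (P (ι (β n))) - f (Q (ι (β n)))| < ε := by
    have := hd.eventually (eventually_abs_sub_lt 0 hε)
    simpa using this
  obtain ⟨n, hn⟩ := hev.exists
  exact absurd (h5 (ι (β n))) (not_lt.2 hn.le)

end
end LLPaux

/-- Every continuous function `f : L₊ × L₊ → ℝ` is constant on a tail square
`{(x,y) : x > μ, y > μ}` for some `μ ∈ L₊`. -/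
theorem longLinePlus_sq_continuous_constant_on_tail (f : LongLinePlus × LongLinePlus → ℝ)
    (hf : Continuous f) :
    ∃ μ : LongLinePlus, ∀ p q : LongLinePlus × LongLinePlus,
      μ < p.1 → μ < p.2 → μ < q.1 → μ < q.2 → f p = f q := by
  classical
  choose μ hμ using fun n : ℕ => LLPaux.key f hf
    (show (0:ℝ) < 1/((n:ℝ)+1) by positivity)
  obtain ⟨s, hs⟩ := LLPaux.exists_bound_strict (fun n => LLPaux.π (μ n))
  refine ⟨LLPaux.ι s, fun p q hp1 hp2 hq1 hq2 => ?_⟩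
  have hμs : ∀ n, μ n < LLPaux.ι s := fun n => (LLPaux.lt_iota_iff _ _).2 (hs n)
  have habs : ∀ n : ℕ, |f p - f q| ≤ 1/((n:ℝ)+1) := fun n =>
    hμ n p q ((hμs n).trans hp1) ((hμs n).trans hp2) ((hμs n).trans hq1) ((hμs n).trans hq2)
  have h0 : |f p - f q| ≤ 0 :=
    ge_of_tendsto' tendsto_one_div_add_atTop_nhds_zero_nat habs
  exact sub_eq_zero.1 (abs_nonpos_iff.1 h0)
end

section
/- For every n ≥ 1, every continuous function f : L₊ⁿ → ℝ is constant on a tail cube: there exists μ ∈ L₊ such that f is constant on the set {x ∈ L₊ⁿ : xᵢ > μ for all i}. -/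
namespace LongTailAux

noncomputable section

/-- The ordinal underlying an element of `SOmega`. -/
def oval (a : SOmega) : Ordinal := (show Set.Iio (Cardinal.aleph 1).ord from a).1

lemma oval_lt (a : SOmega) : oval a < (Cardinal.aleph 1).ord :=
  (show Set.Iio (Cardinal.aleph 1).ord from a).2

/-- Build an element of `SOmega` from an ordinal below `ω₁`. -/
def omk (γ : Ordinal) (h : γ < (Cardinal.aleph 1).ord) : SOmega :=
  show Set.Iio (Cardinal.aleph 1).ord from ⟨γ, h⟩

lemma somega_lt_iff (a b : SOmega) : a < b ↔ oval a < oval b := Iff.rfl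

lemma oval_omk (γ : Ordinal) (h : γ < (Cardinal.aleph 1).ord) : oval (omk γ h) = γ := rfl

/-- The point of `L₊` with given ordinal part and real part `0`. -/
def mk0 (a : SOmega) : LongLinePlus := toLex (a, ⟨0, by norm_num⟩)

lemma L_lt_iff (z w : LongLinePlus) :
    z < w ↔ (ofLex z).1 < (ofLex w).1 ∨ (ofLex z).1 = (ofLex w).1 ∧ (ofLex z).2 < (ofLex w).2 :=
  Prod.Lex.lt_iff

lemma lt_mk0 (z : LongLinePlus) (a : SOmega) (h : (ofLex z).1 < a) : z < mk0 a :=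
  (L_lt_iff z (mk0 a)).2 (Or.inl h)

lemma mk0_lt_mk0 {a b : SOmega} (h : a < b) : mk0 a < mk0 b :=
  lt_mk0 _ _ h

lemma lt_mk0_ordpart {z : LongLinePlus} {a : SOmega} (h : z < mk0 a) :
    (ofLex z).1 < a := by
  rcases (L_lt_iff z (mk0 a)).1 h with h' | ⟨_, h'⟩
  · exact h'
  · exact absurd h' (by
      have : (0:ℝ) ≤ ((ofLex z).2 : ℝ) := (ofLex z).2.2.1
      intro hlt
      exact absurd (show ((ofLex z).2 : ℝ) < 0 from hlt) (not_lt.2 this))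

lemma mk0_strict_bound (z : LongLinePlus) {a : SOmega} (h : oval (ofLex z).1 < oval a) :
    z < mk0 a :=
  lt_mk0 z a ((somega_lt_iff _ _).2 h)

/-- Any countable family in `L₊` has a strict upper bound of the form `mk0 a`. -/
lemma exists_bound (S : ℕ → LongLinePlus) : ∃ a : SOmega, ∀ k, S k < mk0 a := by
  have hlim : Order.IsSuccLimit ((Cardinal.aleph 1).ord) :=
    Cardinal.isSuccLimit_ord (Cardinal.aleph0_le_aleph 1)
  set g : ℕ → Ordinal := fun k => Order.succ (oval (ofLex (S k)).1) with hg
  have hglt : ∀ k, g k < (Cardinal.aleph 1).ord := fun k =>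
    hlim.succ_lt (oval_lt _)
  have hsup : (⨆ k, g k) < (Cardinal.aleph 1).ord := by
    apply Ordinal.iSup_lt_ord _ hglt
    rw [Cardinal.isRegular_aleph_one.cof_eq, Cardinal.mk_nat]
    exact Cardinal.aleph0_lt_aleph_one
  refine ⟨omk _ hsup, fun k => mk0_strict_bound _ ?_⟩
  rw [oval_omk]
  exact lt_of_lt_of_le (Order.lt_succ _) (Ordinal.le_iSup g k)

end
end LongTailAux

open LongTailAux in
/-- For `n ≥ 1`, every continuous function `f : L₊ⁿ → ℝ` is constant on a tail cube
`{x : ∀ i, xᵢ > μ}` for some `μ ∈ L₊`. -/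
theorem longLinePlus_pow_continuous_constant_on_tail (n : ℕ) (hn : 1 ≤ n)
    (f : (Fin n → LongLinePlus) → ℝ) (hf : Continuous f) :
    ∃ μ : LongLinePlus, ∀ x y : Fin n → LongLinePlus,
      (∀ i, μ < x i) → (∀ i, μ < y i) → f x = f y := by
  classical
  by_contra hcon
  push_neg at hcon
  -- hcon : ∀ μ, ∃ x y, (∀ i, μ < x i) ∧ (∀ i, μ < y i) ∧ f x ≠ f y
  -- Step A: get a uniform gap ε.
  have hstep : ∃ ε : ℝ, 0 < ε ∧ ∀ μ, ∃ x y, (∀ i, μ < x i) ∧ (∀ i, μ < y i) ∧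
      ε ≤ |f x - f y| := by
    by_contra hA
    push_neg at hA
    choose μs hμs using fun m : ℕ => hA (1/(m+1)) (by positivity)
    obtain ⟨b, hb⟩ := exists_bound μs
    obtain ⟨x, y, hx, hy, hne⟩ := hcon (mk0 b)
    have hall : ∀ m : ℕ, |f x - f y| < 1/((m:ℝ)+1) := fun m =>
      hμs m x y (fun i => (hb m).trans (hx i)) (fun i => (hb m).trans (hy i))
    have h0 : |f x - f y| ≤ 0 :=
      ge_of_tendsto' tendsto_one_div_add_atTop_nhds_zero_nat (fun m => (hall m).le)
    exact hne (sub_eq_zero.1 (abs_eq_zero.1 (le_antisymm h0 (abs_nonneg _))))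
  obtain ⟨ε, hε, H⟩ := hstep
  choose X Y hX hY hXY using H
  -- bounding function: for each μ a strict `mk0`-bound of μ and all coordinates of X μ, Y μ.
  have hF : ∀ μ : LongLinePlus, ∃ a : SOmega,
      (∀ i, X μ i < mk0 a) ∧ (∀ i, Y μ i < mk0 a) ∧ μ < mk0 a := by
    intro μ
    obtain ⟨a, ha⟩ := exists_bound (fun k =>
      if h : k < n then X μ ⟨k, h⟩ else if h' : k - n < n then Y μ ⟨k - n, h'⟩ else μ)
    refine ⟨a, fun i => ?_, fun i => ?_, ?_⟩
    · have := ha i.1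
      simpa [i.2] using this
    · have := ha (n + i.1)
      have h1 : ¬ (n + i.1 < n) := by omega
      have h2 : n + i.1 - n = i.1 := by omega
      simpa [h1, h2, i.2] using this
    · have := ha (2 * n)
      have h1 : ¬ (2 * n < n) := by omega
      have h2 : ¬ (2 * n - n < n) := by omega
      simpa [h1, h2] using this
  choose A hA1 hA2 hA3 using hF
  -- the increasing sequence in SOmega
  have h0lt : (0 : Ordinal) < (Cardinal.aleph 1).ord :=
    (Cardinal.isSuccLimit_ord (Cardinal.aleph0_le_aleph 1)).pos
  let a : ℕ → SOmega := fun k => Nat.rec (omk 0 h0lt) (fun _ prev => A (mk0 prev)) k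
  let β : ℕ → LongLinePlus := fun k => mk0 (a k)
  have hβsucc : ∀ k, β (k + 1) = mk0 (A (β k)) := fun k => rfl
  have hamono : ∀ k, a k < a (k + 1) := fun k =>
    lt_mk0_ordpart (show β k < mk0 (A (β k)) from hA3 (β k))
  have hβmono : StrictMono β := strictMono_nat_of_lt_succ fun k => mk0_lt_mk0 (hamono k)
  set x : ℕ → (Fin n → LongLinePlus) := fun k => X (β k) with hxdef
  set y : ℕ → (Fin n → LongLinePlus) := fun k => Y (β k) with hydef
  have hxlow : ∀ k i, β k < x k i := fun k i => hX (β k) i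
  have hylow : ∀ k i, β k < y k i := fun k i => hY (β k) i
  have hxhigh : ∀ k i, x k i < β (k + 1) := fun k i => by
    rw [hβsucc]; exact hA1 (β k) i
  have hyhigh : ∀ k i, y k i < β (k + 1) := fun k i => by
    rw [hβsucc]; exact hA2 (β k) i
  -- the limit point
  have hsup : (⨆ k, oval (a k)) < (Cardinal.aleph 1).ord := by
    apply Ordinal.iSup_lt_ord _ (fun k => oval_lt (a k))
    rw [Cardinal.isRegular_aleph_one.cof_eq, Cardinal.mk_nat]
    exact Cardinal.aleph0_lt_aleph_one
  set p : LongLinePlus := mk0 (omk _ hsup) with hp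
  have hβltp : ∀ k, β k < p := by
    intro k
    apply mk0_strict_bound
    rw [oval_omk]
    exact lt_of_lt_of_le ((somega_lt_iff _ _).1 (hamono k)) (Ordinal.le_iSup _ (k + 1))
  -- convergence of sandwiched sequences
  have hconv : ∀ z : ℕ → (Fin n → LongLinePlus), (∀ k i, β k < z k i) →
      (∀ k i, z k i < β (k + 1)) →
      Filter.Tendsto z Filter.atTop (nhds (fun _ => p)) := by
    intro z hzl hzh
    rw [tendsto_pi_nhds]
    intro i
    rw [tendsto_order]
    constructor
    · intro c hc
      have hc1 : oval (ofLex c).1 < ⨆ k, oval (a k) := by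
        have := lt_mk0_ordpart hc
        rwa [somega_lt_iff, oval_omk] at this
      obtain ⟨k, hk⟩ := Ordinal.lt_iSup_iff.1 hc1
      have hcβ : c < β k := mk0_strict_bound _ hk
      filter_upwards [Filter.eventually_ge_atTop k] with j hj
      exact lt_of_lt_of_le hcβ (hβmono.monotone hj) |>.trans (hzl j i)
    · intro c hc
      refine Filter.Eventually.of_forall fun k => ?_
      exact ((hzh k i).trans (hβltp (k + 1))).trans hc
  have hxt : Filter.Tendsto x Filter.atTop (nhds (fun _ => p)) := hconv x hxlow hxhigh
  have hyt : Filter.Tendsto y Filter.atTop (nhds (fun _ => p)) := hconv y hylow hyhigh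
  have hfx : Filter.Tendsto (fun k => f (x k)) Filter.atTop (nhds (f (fun _ => p))) :=
    (hf.tendsto _).comp hxt
  have hfy : Filter.Tendsto (fun k => f (y k)) Filter.atTop (nhds (f (fun _ => p))) :=
    (hf.tendsto _).comp hyt
  have habs : Filter.Tendsto (fun k => |f (x k) - f (y k)|) Filter.atTop (nhds 0) := by
    have := (hfx.sub hfy).abs
    simpa using this
  have : ε ≤ 0 := ge_of_tendsto' habs fun k => hXY (β k)
  linarith
end

section
/- For every n ≥ 1, every continuous function f : L₊ⁿ → [0,1] factors through the retraction r_α for some α ∈ L₊, where r_α : L₊ⁿ → [0,α]ⁿ is the product of the maps sending β to min(β, α) in each coordinate; that is, f = (f restricted to [0,α]ⁿ) ∘ r_α. -/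
namespace LLP
noncomputable section
abbrev W : Ordinal := (Cardinal.aleph 1).ord
abbrev Ico01 := ↥(Set.Ico (0:ℝ) 1)
def ordOf (a : LongLinePlus) : Ordinal :=
  ((ofLex (show SOmega ×ₗ Ico01 from a)).1 : ↥(Set.Iio W)).1
def reOf (a : LongLinePlus) : ℝ :=
  ((ofLex (show SOmega ×ₗ Ico01 from a)).2).1
lemma ordOf_lt_W (a : LongLinePlus) : ordOf a < W :=
  ((ofLex (show SOmega ×ₗ Ico01 from a)).1 : ↥(Set.Iio W)).2
lemma reOf_nonneg (a : LongLinePlus) : 0 ≤ reOf a :=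
  ((ofLex (show SOmega ×ₗ Ico01 from a)).2).2.1
lemma reOf_lt_one (a : LongLinePlus) : reOf a < 1 :=
  ((ofLex (show SOmega ×ₗ Ico01 from a)).2).2.2
def mk (o : Ordinal) (h : o < W) (t : ℝ) (h0 : 0 ≤ t) (h1 : t < 1) : LongLinePlus :=
  show SOmega ×ₗ Ico01 from toLex ((show SOmega from ⟨o, h⟩), ⟨t, h0, h1⟩)
@[simp] lemma ordOf_mk (o h t h0 h1) : ordOf (mk o h t h0 h1) = o := rfl
@[simp] lemma reOf_mk (o h t h0 h1) : reOf (mk o h t h0 h1) = t := rfl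
lemma le_iff (a b : LongLinePlus) :
    a ≤ b ↔ ordOf a < ordOf b ∨ (ordOf a = ordOf b ∧ reOf a ≤ reOf b) := by
  show toLex (ofLex (show SOmega ×ₗ Ico01 from a)) ≤ toLex (ofLex (show SOmega ×ₗ Ico01 from b)) ↔ _
  rw [Prod.Lex.le_iff]
  exact ⟨fun h => h.imp id (fun ⟨h, h2⟩ => ⟨congrArg Subtype.val h, h2⟩),
    fun h => h.imp id (fun ⟨h, h2⟩ => ⟨Subtype.ext h, h2⟩)⟩
lemma lt_iff (a b : LongLinePlus) :
    a < b ↔ ordOf a < ordOf b ∨ (ordOf a = ordOf b ∧ reOf a < reOf b) := by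
  show toLex (ofLex (show SOmega ×ₗ Ico01 from a)) < toLex (ofLex (show SOmega ×ₗ Ico01 from b)) ↔ _
  rw [Prod.Lex.lt_iff]
  exact ⟨fun h => h.imp id (fun ⟨h, h2⟩ => ⟨congrArg Subtype.val h, h2⟩),
    fun h => h.imp id (fun ⟨h, h2⟩ => ⟨Subtype.ext h, h2⟩)⟩

lemma ordOf_mono {a b : LongLinePlus} (h : a ≤ b) : ordOf a ≤ ordOf b := by
  rcases (le_iff a b).1 h with h | ⟨h, _⟩
  · exact h.le
  · exact h.le

lemma reOf_mono {a b : LongLinePlus} (h : a ≤ b) (ho : ordOf a = ordOf b) :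
    reOf a ≤ reOf b := by
  rcases (le_iff a b).1 h with h | ⟨_, h2⟩
  · exact absurd h (by simp [ho])
  · exact h2

lemma exists_gt (a : LongLinePlus) : ∃ b, a < b := by
  refine ⟨mk (ordOf a) (ordOf_lt_W a) ((reOf a + 1) / 2) ?_ ?_, ?_⟩
  · linarith [reOf_nonneg a]
  · linarith [reOf_lt_one a]
  · rw [lt_iff]
    exact Or.inr ⟨by simp, by simp; linarith [reOf_lt_one a]⟩

lemma isLimit_W : Order.IsSuccLimit W := Cardinal.isSuccLimit_ord (by
  simpa using (Cardinal.aleph0_le_aleph 1))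

/-- every ℕ-indexed sequence in L₊ is bounded above. -/
lemma bdd_seq (g : ℕ → LongLinePlus) : ∃ b, ∀ k, g k ≤ b := by
  have hc : (Cardinal.mk ℕ) < W.cof := by
    rw [Cardinal.isRegular_aleph_one.cof_eq]
    simpa using Cardinal.aleph0_lt_aleph_one
  have hs : (⨆ k, ordOf (g k)) < W :=
    Ordinal.iSup_lt_ord hc (fun k => ordOf_lt_W (g k))
  have hs1 : (⨆ k, ordOf (g k)) + 1 < W := by rw [Ordinal.add_one_eq_succ]; exact isLimit_W.succ_lt hs
  refine ⟨mk _ hs1 0 le_rfl one_pos, fun k => ?_⟩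
  rw [le_iff]
  refine Or.inl ?_
  simp only [ordOf_mk]
  exact lt_of_le_of_lt (le_ciSup (Ordinal.bddAbove_range _) k)
    (by rw [Ordinal.add_one_eq_succ]; exact Order.lt_succ _)

/-- LUB existence for nonempty bounded-above sets. -/
lemma exists_isLUB {S : Set LongLinePlus} (hne : S.Nonempty) (hbd : BddAbove S) :
    ∃ a, IsLUB S a := by
  obtain ⟨b, hb⟩ := hbd
  set O : Set Ordinal := ordOf '' S with hO
  have hOne : O.Nonempty := hne.image _
  have hObd : BddAbove O := ⟨ordOf b, by rintro _ ⟨a, ha, rfl⟩; exact ordOf_mono (hb ha)⟩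
  set γ : Ordinal := sSup O with hγ
  have hγW : γ < W := lt_of_le_of_lt (csSup_le hOne (by
      rintro _ ⟨a, ha, rfl⟩; exact ordOf_mono (hb ha))) (ordOf_lt_W b)
  have hub : ∀ a ∈ S, ordOf a ≤ γ := fun a ha => le_csSup hObd ⟨a, ha, rfl⟩
  by_cases hγO : γ ∈ O
  · -- sup of first coords attained
    set R : Set ℝ := reOf '' {a ∈ S | ordOf a = γ} with hR
    obtain ⟨a₀, ha₀S, ha₀⟩ := hγO
    have hRne : R.Nonempty := ⟨reOf a₀, a₀, ⟨ha₀S, ha₀⟩, rfl⟩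
    have hRbd : BddAbove R := ⟨1, by rintro _ ⟨a, _, rfl⟩; exact (reOf_lt_one a).le⟩
    set r : ℝ := sSup R with hr
    have hr0 : 0 ≤ r := le_csSup hRbd ⟨a₀, ⟨ha₀S, ha₀⟩, rfl⟩ |>.trans' (reOf_nonneg a₀)
    have hr1 : r ≤ 1 := csSup_le hRne (by rintro _ ⟨a, _, rfl⟩; exact (reOf_lt_one a).le)
    by_cases hrlt : r < 1
    · refine ⟨mk γ hγW r hr0 hrlt, ⟨fun a ha => ?_, fun c hc => ?_⟩⟩
      · rw [le_iff]; simp only [ordOf_mk, reOf_mk]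
        rcases lt_or_eq_of_le (hub a ha) with h | h
        · exact Or.inl h
        · exact Or.inr ⟨h, le_csSup hRbd ⟨a, ⟨ha, h⟩, rfl⟩⟩
      · have hγc : γ ≤ ordOf c := ha₀ ▸ ordOf_mono (hc ha₀S)
        rw [le_iff]; simp only [ordOf_mk, reOf_mk]
        rcases lt_or_eq_of_le hγc with h | h
        · exact Or.inl h
        · refine Or.inr ⟨h, csSup_le hRne ?_⟩
          rintro _ ⟨a, ⟨haS, haγ⟩, rfl⟩
          exact reOf_mono (hc haS) (haγ.trans h)
    · -- r = 1 : lub is (γ+1, 0)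
      have hγ1W : γ + 1 < W := by rw [Ordinal.add_one_eq_succ]; exact isLimit_W.succ_lt hγW
      refine ⟨mk (γ+1) hγ1W 0 le_rfl one_pos, ⟨fun a ha => ?_, fun c hc => ?_⟩⟩
      · rw [le_iff]; simp only [ordOf_mk]
        exact Or.inl (lt_of_le_of_lt (hub a ha) (by rw [Ordinal.add_one_eq_succ]; exact Order.lt_succ _))
      · have hγc : γ ≤ ordOf c := ha₀ ▸ ordOf_mono (hc ha₀S)
        have hne' : γ ≠ ordOf c := by
          intro h
          have : r ≤ reOf c := csSup_le hRne (by
            rintro _ ⟨a, ⟨haS, haγ⟩, rfl⟩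
            exact reOf_mono (hc haS) (haγ.trans h))
          exact absurd (lt_of_le_of_lt ((not_lt.1 hrlt).trans this) (reOf_lt_one c))
            (lt_irrefl 1)
        have hγc' : γ + 1 ≤ ordOf c := by rw [Ordinal.add_one_eq_succ]; exact Order.succ_le_iff.mpr (hγc.lt_of_ne hne')
        rw [le_iff]; simp only [ordOf_mk, reOf_mk]
        rcases lt_or_eq_of_le hγc' with h | h
        · exact Or.inl h
        · exact Or.inr ⟨h, reOf_nonneg c⟩
  · -- sup not attained: lub is (γ, 0)
    refine ⟨mk γ hγW 0 le_rfl one_pos, ⟨fun a ha => ?_, fun c hc => ?_⟩⟩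
    · rw [le_iff]; simp only [ordOf_mk]
      exact Or.inl ((hub a ha).lt_of_ne (fun h => hγO (h ▸ ⟨a, ha, rfl⟩)))
    · have hγc : γ ≤ ordOf c := csSup_le hOne (by
        rintro _ ⟨a, ha, rfl⟩; exact ordOf_mono (hc ha))
      rw [le_iff]; simp only [ordOf_mk, reOf_mk]
      rcases lt_or_eq_of_le hγc with h | h
      · exact Or.inl h
      · exact Or.inr ⟨h, reOf_nonneg c⟩

/-- GLB existence for nonempty sets. -/
lemma exists_isGLB {S : Set LongLinePlus} (hne : S.Nonempty) :
    ∃ a, IsGLB S a := by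
  set O : Set Ordinal := ordOf '' S with hO
  obtain ⟨γ, hγO, hγmin⟩ := wellFounded_lt.has_min O (hne.image _)
  obtain ⟨a₀, ha₀S, ha₀⟩ := hγO
  have hlbO : ∀ a ∈ S, γ ≤ ordOf a := fun a ha =>
    not_lt.1 (hγmin _ ⟨a, ha, rfl⟩)
  set R : Set ℝ := reOf '' {a ∈ S | ordOf a = γ} with hR
  have hRne : R.Nonempty := ⟨reOf a₀, a₀, ⟨ha₀S, ha₀⟩, rfl⟩
  have hRbd : BddBelow R := ⟨0, by rintro _ ⟨a, _, rfl⟩; exact reOf_nonneg a⟩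
  set r : ℝ := sInf R with hr
  have hr0 : 0 ≤ r := le_csInf hRne (by rintro _ ⟨a, _, rfl⟩; exact reOf_nonneg a)
  have hr1 : r < 1 := lt_of_le_of_lt (csInf_le hRbd ⟨a₀, ⟨ha₀S, ha₀⟩, rfl⟩) (reOf_lt_one a₀)
  refine ⟨mk γ (ha₀ ▸ ordOf_lt_W a₀) r hr0 hr1, ⟨fun a ha => ?_, fun c hc => ?_⟩⟩
  · rw [le_iff]; simp only [ordOf_mk, reOf_mk]
    rcases lt_or_eq_of_le (hlbO a ha) with h | h
    · exact Or.inl h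
    · exact Or.inr ⟨h, csInf_le hRbd ⟨a, ⟨ha, h.symm⟩, rfl⟩⟩
  · have hcγ : ordOf c ≤ γ := ha₀ ▸ ordOf_mono (hc ha₀S)
    rw [le_iff]; simp only [ordOf_mk, reOf_mk]
    rcases lt_or_eq_of_le hcγ with h | h
    · exact Or.inl h
    · refine Or.inr ⟨h, le_csInf hRne ?_⟩
      rintro _ ⟨a, ⟨haS, haγ⟩, rfl⟩
      exact reOf_mono (hc haS) (h.trans haγ.symm)


open Filter Topology in
lemma exists_tendsto_subseq (u : ℕ → LongLinePlus) :
    ∃ (x : LongLinePlus) (φ : ℕ → ℕ), StrictMono φ ∧ Tendsto (u ∘ φ) atTop (𝓝 x) := by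
  haveI : IsTrans LongLinePlus (· ≤ ·) := ⟨fun _ _ _ => le_trans⟩
  obtain ⟨g, hg | hg⟩ := exists_increasing_or_nonincreasing_subseq (· ≤ ·) u
  · have hmono : Monotone (u ∘ g) := fun a b hab =>
      hab.eq_or_lt.elim (fun e => e ▸ le_rfl) (fun l => hg _ _ l)
    obtain ⟨b, hb⟩ := bdd_seq (u ∘ g)
    obtain ⟨a, ha⟩ := exists_isLUB (S := Set.range (u ∘ g)) ⟨_, Set.mem_range_self 0⟩
      ⟨b, by rintro _ ⟨k, rfl⟩; exact hb k⟩
    exact ⟨a, g, g.strictMono, tendsto_atTop_isLUB hmono ha⟩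
  · have hanti : Antitone (u ∘ g) := fun a b hab =>
      hab.eq_or_lt.elim (fun e => e ▸ le_rfl) (fun l => (not_le.1 (hg _ _ l)).le)
    obtain ⟨a, ha⟩ := exists_isGLB (S := Set.range (u ∘ g)) ⟨_, Set.mem_range_self 0⟩
    exact ⟨a, g, g.strictMono, tendsto_atTop_isGLB hanti ha⟩

open Filter Topology in
lemma exists_tendsto_subseq_pi {n : ℕ} (u : ℕ → Fin n → LongLinePlus) :
    ∃ (x : Fin n → LongLinePlus) (φ : ℕ → ℕ), StrictMono φ ∧
      Tendsto (u ∘ φ) atTop (𝓝 x) := by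
  have key : ∀ s : Finset (Fin n), ∃ φ : ℕ → ℕ, StrictMono φ ∧
      ∀ i ∈ s, ∃ a, Tendsto (fun k => u (φ k) i) atTop (𝓝 a) := by
    intro s
    induction s using Finset.induction_on with
    | empty => exact ⟨id, strictMono_id, by simp⟩
    | @insert j s hj ih =>
      obtain ⟨φ, hφ, hs⟩ := ih
      obtain ⟨a, ψ, hψ, ha⟩ := exists_tendsto_subseq (fun k => u (φ k) j)
      refine ⟨φ ∘ ψ, hφ.comp hψ, ?_⟩
      intro i hi
      rcases Finset.mem_insert.1 hi with rfl | hi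
      · exact ⟨a, ha⟩
      · obtain ⟨b, hb⟩ := hs i hi
        exact ⟨b, hb.comp hψ.tendsto_atTop⟩
  obtain ⟨φ, hφ, h⟩ := key Finset.univ
  choose a ha using fun i => h i (Finset.mem_univ i)
  exact ⟨a, φ, hφ, tendsto_pi_nhds.2 ha⟩

end
end LLP

open Filter Topology

/-- For `n ≥ 1`, every continuous `f : L₊ⁿ → [0,1]` factors through the retraction
`r_α : L₊ⁿ → [0,α]ⁿ`, `r_α(x)ᵢ = min (xᵢ) α`, for some `α ∈ L₊`:
`f = f ∘ r_α`. -/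
theorem longLinePlus_pow_continuous_factors_through_retraction (n : ℕ) (hn : 1 ≤ n)
    (f : (Fin n → LongLinePlus) → Set.Icc (0:ℝ) 1) (hf : Continuous f) :
    ∃ α : LongLinePlus, ∀ x : Fin n → LongLinePlus,
      f x = f (fun i => min (x i) α) := by
  classical
  haveI : Nonempty (Fin n) := ⟨⟨0, hn⟩⟩
  by_contra hcon
  push_neg at hcon
  have key : ∀ m : ℕ, ∃ β : LongLinePlus, ∀ α, β < α → ∀ x,
      |(f x : ℝ) - (f (fun i => min (x i) α) : ℝ)| < 1/(m+1) := by
    intro m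
    by_contra hk
    push_neg at hk
    have hk' : ∀ β, ∃ p : LongLinePlus × (Fin n → LongLinePlus),
        β < p.1 ∧ 1/(m+1:ℝ) ≤ |(f p.2 : ℝ) - (f (fun i => min (p.2 i) p.1) : ℝ)| := by
      intro β; obtain ⟨α, hβα, x, hx⟩ := hk β; exact ⟨(α, x), hβα, hx⟩
    choose F hF1 hF2 using hk'
    have hW0 : (0:Ordinal) < LLP.W := Cardinal.isRegular_aleph_one.ord_pos
    let l0 : LongLinePlus := LLP.mk 0 hW0 0 le_rfl one_pos
    let bnd : LongLinePlus × (Fin n → LongLinePlus) → LongLinePlus :=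
      fun p => max p.1 (Finset.univ.sup' Finset.univ_nonempty p.2)
    let seq : ℕ → LongLinePlus × (Fin n → LongLinePlus) :=
      fun k => Nat.rec (F l0) (fun _ p => F (bnd p)) k
    set α : ℕ → LongLinePlus := fun k => (seq k).1 with hα
    set x : ℕ → Fin n → LongLinePlus := fun k => (seq k).2 with hx
    have hstep : ∀ k, bnd (seq k) < α (k+1) := fun k => hF1 (bnd (seq k))
    have hmono : StrictMono α := strictMono_nat_of_lt_succ
      (fun k => lt_of_le_of_lt (le_max_left _ _) (hstep k))
    have hxle : ∀ k i, x k i ≤ α (k+1) := fun k i =>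
      le_trans (le_trans (Finset.le_sup' _ (Finset.mem_univ i)) (le_max_right _ _)) (hstep k).le
    have hgap : ∀ k, 1/(m+1:ℝ) ≤
        |(f (x k) : ℝ) - (f (fun i => min (x k i) (α k)) : ℝ)| := by
      intro k
      cases k with
      | zero => exact hF2 l0
      | succ k => exact hF2 (bnd (seq k))
    obtain ⟨b, hb⟩ := LLP.bdd_seq α
    obtain ⟨σ, hσ⟩ := LLP.exists_isLUB (S := Set.range α) ⟨α 0, Set.mem_range_self 0⟩
      ⟨b, by rintro _ ⟨k, rfl⟩; exact hb k⟩
    have hαlim : Tendsto α atTop (𝓝 σ) := tendsto_atTop_isLUB hmono.monotone hσ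
    have hxσ : ∀ k i, x k i ≤ σ := fun k i => (hxle k i).trans (hσ.1 (Set.mem_range_self (k+1)))
    obtain ⟨xl, φ, hφ, hxl⟩ := LLP.exists_tendsto_subseq_pi x
    have hal : Tendsto (fun k => α (φ k)) atTop (𝓝 σ) := hαlim.comp hφ.tendsto_atTop
    have hxi : ∀ i, Tendsto (fun k => x (φ k) i) atTop (𝓝 (xl i)) :=
      fun i => tendsto_pi_nhds.1 hxl i
    have hxlσ : ∀ i, xl i ≤ σ := fun i =>
      le_of_tendsto (hxi i) (Eventually.of_forall (fun k => hxσ (φ k) i))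
    have hyl : Tendsto (fun k => fun i => min (x (φ k) i) (α (φ k))) atTop (𝓝 xl) := by
      rw [tendsto_pi_nhds]
      intro i
      have h := (hxi i).min hal
      rwa [min_eq_left (hxlσ i)] at h
    have hfc : ∀ {g : ℕ → Fin n → LongLinePlus} {y : Fin n → LongLinePlus},
        Tendsto g atTop (𝓝 y) →
        Tendsto (fun k => (f (g k) : ℝ)) atTop (𝓝 (f y : ℝ)) :=
      fun hg => ((continuous_subtype_val.comp hf).tendsto _).comp hg
    have hdl : Tendsto (fun k => |(f (x (φ k)) : ℝ) -
        (f (fun i => min (x (φ k) i) (α (φ k))) : ℝ)|) atTop (𝓝 0) := by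
      have h := ((hfc hxl).sub (hfc hyl)).abs
      simpa using h
    have h1 : 1/(m+1:ℝ) ≤ 0 :=
      ge_of_tendsto hdl (Eventually.of_forall (fun k => hgap (φ k)))
    have h2 : (0:ℝ) < 1/(m+1) := by positivity
    linarith
  choose β hβ using key
  obtain ⟨b, hb⟩ := LLP.bdd_seq β
  obtain ⟨α, hbα⟩ := LLP.exists_gt b
  obtain ⟨x, hx⟩ := hcon α
  have hne : (f x : ℝ) ≠ (f (fun i => min (x i) α) : ℝ) := fun h => hx (Subtype.ext h)
  have hpos : 0 < |(f x : ℝ) - (f (fun i => min (x i) α) : ℝ)| := abs_pos.2 (sub_ne_zero.2 hne)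
  obtain ⟨m, hm⟩ := exists_nat_one_div_lt hpos
  exact absurd (hβ m α (lt_of_le_of_lt (hb m) hbα) x) (not_lt.2 hm.le)
end

section
/- For every n ≥ 1, the product L̄₊ⁿ of extended half-long lines is the Stone–Čech compactification of L₊ⁿ: every continuous map f : L₊ⁿ → [0,1] extends (uniquely) to a continuous map L̄₊ⁿ → [0,1]. -/
/-- The extended half-long line `L̄₊ = L₊ ∪ {Ω}`, with `Ω` adjoined as a top element,
given the order topology. -/
def LongLinePlusBar : Type 1 := WithTop LongLinePlus

noncomputable instance : LinearOrder LongLinePlusBar :=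
  inferInstanceAs (LinearOrder (WithTop LongLinePlus))

instance : OrderTop LongLinePlusBar := inferInstanceAs (OrderTop (WithTop LongLinePlus))

noncomputable instance : TopologicalSpace LongLinePlusBar := Preorder.topology LongLinePlusBar
instance : OrderTopology LongLinePlusBar := ⟨rfl⟩

/-- The inclusion `L₊ ↪ L̄₊`. -/
def LongLinePlus.toBar (x : LongLinePlus) : LongLinePlusBar := WithTop.some x

open Set Filter Topology

namespace StoneCechAux

noncomputable abbrev w1 : Ordinal.{0} := (Cardinal.aleph 1).ord

noncomputable def mk (γ : Ordinal.{0}) (hγ : γ < w1) (t : ℝ) (ht : t ∈ Set.Ico (0:ℝ) 1) :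
    LongLinePlus :=
  toLex ((⟨γ, hγ⟩ : Set.Iio w1), (⟨t, ht⟩ : Set.Ico (0:ℝ) 1))

lemma surj (x : LongLinePlus) : ∃ γ hγ t ht, x = mk γ hγ t ht := by
  obtain ⟨⟨⟨γ, hγ⟩, ⟨t, ht⟩⟩, rfl⟩ : ∃ p : (Set.Iio w1) × (Set.Ico (0:ℝ) 1), toLex p = x :=
    ⟨ofLex x, rfl⟩
  exact ⟨γ, hγ, t, ht, rfl⟩

lemma mk_le_mk {γ δ : Ordinal} {hγ hδ t ht s hs} :
    mk γ hγ t ht ≤ mk δ hδ s hs ↔ γ < δ ∨ (γ = δ ∧ t ≤ s) := by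
  show @LE.le (SOmega ×ₗ Set.Ico (0:ℝ) 1) _ (toLex _) (toLex _) ↔ _
  rw [Prod.Lex.toLex_le_toLex]
  constructor
  · rintro (h | ⟨h1, h2⟩)
    · exact Or.inl h
    · exact Or.inr ⟨congrArg Subtype.val h1, h2⟩
  · rintro (h | ⟨h1, h2⟩)
    · exact Or.inl h
    · exact Or.inr ⟨Subtype.ext h1, h2⟩

lemma mk_lt_mk {γ δ : Ordinal} {hγ hδ t ht s hs} :
    mk γ hγ t ht < mk δ hδ s hs ↔ γ < δ ∨ (γ = δ ∧ t < s) := by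
  show @LT.lt (SOmega ×ₗ Set.Ico (0:ℝ) 1) _ (toLex _) (toLex _) ↔ _
  rw [Prod.Lex.toLex_lt_toLex]
  constructor
  · rintro (h | ⟨h1, h2⟩)
    · exact Or.inl h
    · exact Or.inr ⟨congrArg Subtype.val h1, h2⟩
  · rintro (h | ⟨h1, h2⟩)
    · exact Or.inl h
    · exact Or.inr ⟨Subtype.ext h1, h2⟩

lemma omega1_isLimit : Order.IsSuccLimit w1 := Cardinal.isSuccLimit_ord (Cardinal.aleph0_le_aleph 1)

instance : Nonempty LongLinePlus :=
  ⟨mk 0 omega1_isLimit.pos 0 ⟨le_refl _, one_pos⟩⟩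

instance : NoMaxOrder LongLinePlus := by
  constructor
  intro x
  obtain ⟨γ, hγ, t, ht, rfl⟩ := surj x
  refine ⟨mk γ hγ ((t+1)/2) ⟨by linarith [ht.1], by linarith [ht.2]⟩, ?_⟩
  refine mk_lt_mk.2 ?_
  exact Or.inr ⟨rfl, by linarith [ht.2]⟩

/-- Every countable family in `L₊` is bounded above (strictly). -/
lemma countable_bddAbove (u : ℕ → LongLinePlus) : ∃ b, ∀ k, u k < b := by
  choose γ hγ t ht hu using fun k => surj (u k)
  have hlt : ∀ k, γ k < w1 := hγ
  have hsup : (⨆ k, γ k) < w1 := by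
    apply Ordinal.iSup_lt_ord ?_ hlt
    · rw [Cardinal.mk_nat, Cardinal.isRegular_aleph_one.cof_eq]
      exact Cardinal.aleph0_lt_aleph_one
  have hsucc : Order.succ (⨆ k, γ k) < w1 := omega1_isLimit.succ_lt hsup
  refine ⟨mk _ hsucc 0 ⟨le_refl _, one_pos⟩, fun k => ?_⟩
  rw [hu k]
  refine mk_lt_mk.2 ?_
  exact Or.inl ((le_ciSup (f := γ) (Ordinal.bddAbove_range _) k).trans_lt (Order.lt_succ _))



/-- Existence of least upper bounds for nonempty bounded sets in `L₊`. -/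
lemma exists_isLUB {s : Set LongLinePlus} (hne : s.Nonempty) (hbdd : BddAbove s) :
    ∃ b, IsLUB s b := by
  classical
  set O : Set Ordinal := {γ | ∃ hγ t ht, mk γ hγ t ht ∈ s} with hO
  obtain ⟨x₀, hx₀⟩ := hne
  obtain ⟨B, hB⟩ := hbdd
  obtain ⟨β, hβ, u, hu, rfl⟩ := surj B
  have hOne : O.Nonempty := by
    obtain ⟨γ, hγ, t, ht, rfl⟩ := surj x₀
    exact ⟨γ, hγ, t, ht, hx₀⟩
  have hOb : ∀ γ ∈ O, γ ≤ β := by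
    rintro γ ⟨hγ, t, ht, hmem⟩
    rcases mk_le_mk.1 (hB hmem) with h | ⟨h, _⟩
    · exact h.le
    · exact h.le
  have hObdd : BddAbove O := ⟨β, hOb⟩
  set g := sSup O with hg
  have hgβ : g ≤ β := csSup_le hOne hOb
  have hgw : g < w1 := lt_of_le_of_lt hgβ hβ
  by_cases hmem : g ∈ O
  · obtain ⟨hg', t₀, ht₀, hmem₀⟩ := hmem
    set T : Set ℝ := {t | ∃ ht, mk g hgw t ht ∈ s} with hT
    have hTne : T.Nonempty := ⟨t₀, ht₀, hmem₀⟩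
    have hTb : ∀ t ∈ T, t ≤ 1 := by rintro t ⟨ht, _⟩; exact ht.2.le
    have hTbdd : BddAbove T := ⟨1, hTb⟩
    set r := sSup T with hr
    have hr0 : (0:ℝ) ≤ r := le_trans ht₀.1 (le_csSup hTbdd ⟨ht₀, hmem₀⟩)
    have hr1 : r ≤ 1 := csSup_le hTne hTb
    rcases lt_or_eq_of_le hr1 with hrlt | hreq
    · refine ⟨mk g hgw r ⟨hr0, hrlt⟩, ?_, ?_⟩
      · rintro x hx
        obtain ⟨γ, hγ, t, ht, rfl⟩ := surj x
        have hγO : γ ∈ O := ⟨hγ, t, ht, hx⟩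
        rcases lt_or_eq_of_le (le_csSup hObdd hγO) with h | h
        · exact mk_le_mk.2 (Or.inl h)
        · subst h
          exact mk_le_mk.2 (Or.inr ⟨rfl, le_csSup hTbdd ⟨ht, hx⟩⟩)
      · rintro c hc
        obtain ⟨δ, hδ, u', hu', rfl⟩ := surj c
        rcases mk_le_mk.1 (hc hmem₀) with h | ⟨h, h2⟩
        · exact mk_le_mk.2 (Or.inl h)
        · subst h
          refine mk_le_mk.2 (Or.inr ⟨rfl, csSup_le hTne ?_⟩)
          rintro t ⟨ht, hts⟩
          rcases mk_le_mk.1 (hc hts) with h' | ⟨_, h'⟩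
          · exact absurd h' (lt_irrefl _)
          · exact h'
    · -- sup of real parts is 1 : LUB is (g+1, 0)
      have hsucc : Order.succ g < w1 := omega1_isLimit.succ_lt hgw
      have h0 : (0:ℝ) ∈ Set.Ico (0:ℝ) 1 := ⟨le_refl _, one_pos⟩
      refine ⟨mk (Order.succ g) hsucc 0 h0, ?_, ?_⟩
      · rintro x hx
        obtain ⟨γ, hγ, t, ht, rfl⟩ := surj x
        have hγO : γ ∈ O := ⟨hγ, t, ht, hx⟩
        exact mk_le_mk.2 (Or.inl ((le_csSup hObdd hγO).trans_lt (Order.lt_succ _)))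
      · rintro c hc
        obtain ⟨δ, hδ, u', hu', rfl⟩ := surj c
        rcases mk_le_mk.1 (hc hmem₀) with h | ⟨h, _⟩
        · have : Order.succ g ≤ δ := Order.succ_le_of_lt h
          rcases lt_or_eq_of_le this with h' | h'
          · exact mk_le_mk.2 (Or.inl h')
          · exact mk_le_mk.2 (Or.inr ⟨h', hu'.1⟩)
        · exfalso
          subst h
          have : u' < r := hreq ▸ hu'.2
          obtain ⟨t, htT, hut⟩ := exists_lt_of_lt_csSup hTne this
          obtain ⟨ht, hts⟩ := htT
          rcases mk_le_mk.1 (hc hts) with h' | ⟨_, h'⟩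
          · exact absurd h' (lt_irrefl _)
          · exact absurd h' (not_le_of_gt hut)
  · have h0 : (0:ℝ) ∈ Set.Ico (0:ℝ) 1 := ⟨le_refl _, one_pos⟩
    refine ⟨mk g hgw 0 h0, ?_, ?_⟩
    · rintro x hx
      obtain ⟨γ, hγ, t, ht, rfl⟩ := surj x
      have hγO : γ ∈ O := ⟨hγ, t, ht, hx⟩
      have : γ < g := lt_of_le_of_ne (le_csSup hObdd hγO) (fun h => hmem (h ▸ hγO))
      exact mk_le_mk.2 (Or.inl this)
    · rintro c hc
      obtain ⟨δ, hδ, u', hu', rfl⟩ := surj c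
      have hδγ : g ≤ δ := by
        apply csSup_le hOne
        rintro γ ⟨hγ, t, ht, hmem'⟩
        rcases mk_le_mk.1 (hc hmem') with h | ⟨h, _⟩
        · exact h.le
        · exact h.le
      rcases lt_or_eq_of_le hδγ with h | h
      · exact mk_le_mk.2 (Or.inl h)
      · exact mk_le_mk.2 (Or.inr ⟨h, hu'.1⟩)

/-- Existence of greatest lower bounds for nonempty sets in `L₊`. -/
lemma exists_isGLB {s : Set LongLinePlus} (hne : s.Nonempty) :
    ∃ b, IsGLB s b := by
  classical
  set O : Set Ordinal := {γ | ∃ hγ t ht, mk γ hγ t ht ∈ s} with hO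
  obtain ⟨x₀, hx₀⟩ := hne
  have hOne : O.Nonempty := by
    obtain ⟨γ, hγ, t, ht, rfl⟩ := surj x₀
    exact ⟨γ, hγ, t, ht, hx₀⟩
  set d := wellFounded_lt.min O hOne with hd
  have hdO : d ∈ O := wellFounded_lt.min_mem O hOne
  have hdle : ∀ γ ∈ O, d ≤ γ := fun γ hγ => not_lt.1 (wellFounded_lt.not_lt_min O hγ)
  obtain ⟨hdw, t₀, ht₀, hmem₀⟩ := hdO
  set T : Set ℝ := {t | ∃ ht, mk d hdw t ht ∈ s} with hT
  have hTne : T.Nonempty := ⟨t₀, ht₀, hmem₀⟩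
  have hTb : ∀ t ∈ T, 0 ≤ t := by rintro t ⟨ht, _⟩; exact ht.1
  have hTbdd : BddBelow T := ⟨0, hTb⟩
  set r := sInf T with hr
  have hr0 : (0:ℝ) ≤ r := le_csInf hTne hTb
  have hr1 : r < 1 := lt_of_le_of_lt (csInf_le hTbdd ⟨ht₀, hmem₀⟩) ht₀.2
  refine ⟨mk d hdw r ⟨hr0, hr1⟩, ?_, ?_⟩
  · rintro x hx
    obtain ⟨γ, hγ, t, ht, rfl⟩ := surj x
    have hγO : γ ∈ O := ⟨hγ, t, ht, hx⟩
    rcases lt_or_eq_of_le (hdle γ hγO) with h | h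
    · exact mk_le_mk.2 (Or.inl h)
    · subst h
      exact mk_le_mk.2 (Or.inr ⟨rfl, csInf_le hTbdd ⟨ht, hx⟩⟩)
  · rintro c hc
    obtain ⟨δ, hδ, u', hu', rfl⟩ := surj c
    rcases mk_le_mk.1 (hc hmem₀) with h | ⟨h, h2⟩
    · exact mk_le_mk.2 (Or.inl h)
    · subst h
      refine mk_le_mk.2 (Or.inr ⟨rfl, le_csInf hTne ?_⟩)
      rintro t ⟨ht, hts⟩
      rcases mk_le_mk.1 (hc hts) with h' | ⟨_, h'⟩
      · exact absurd h' (lt_irrefl _)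
      · exact h'


/-- `L₊` is sequentially compact: every sequence has a convergent subsequence. -/
lemma exists_tendsto_subseq (u : ℕ → LongLinePlus) :
    ∃ φ : ℕ → ℕ, StrictMono φ ∧ ∃ l, Tendsto (fun k => u (φ k)) atTop (𝓝 l) := by
  haveI : IsTrans LongLinePlus (· ≤ ·) := ⟨fun _ _ _ => le_trans⟩
  obtain ⟨g, hg | hg⟩ := exists_increasing_or_nonincreasing_subseq (· ≤ ·) u
  · -- monotone subsequence
    have mono : Monotone (fun k => u (g k)) := by
      intro a b hab
      rcases eq_or_lt_of_le hab with h | h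
      · exact h ▸ le_refl _
      · exact hg a b h
    obtain ⟨b, hb⟩ := countable_bddAbove (fun k => u (g k))
    have hbdd : BddAbove (Set.range fun k => u (g k)) := by
      refine ⟨b, ?_⟩
      rintro x ⟨k, rfl⟩
      exact (hb k).le
    obtain ⟨l, hl⟩ := exists_isLUB (Set.range_nonempty _) hbdd
    exact ⟨g, g.strictMono, l, tendsto_atTop_isLUB mono hl⟩
  · -- strictly decreasing subsequence
    have anti : Antitone (fun k => u (g k)) := by
      intro a b hab
      rcases eq_or_lt_of_le hab with h | h
      · exact h ▸ le_refl _
      · exact (not_le.1 (hg a b h)).le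
    obtain ⟨l, hl⟩ := exists_isGLB (Set.range_nonempty (fun k => u (g k)))
    exact ⟨g, g.strictMono, l, tendsto_atTop_isGLB anti hl⟩

lemma exists_tendsto_subseq_pi {m : ℕ} (u : ℕ → Fin m → LongLinePlus) :
    ∃ φ : ℕ → ℕ, StrictMono φ ∧ ∀ i, ∃ l, Tendsto (fun k => u (φ k) i) atTop (𝓝 l) := by
  suffices h : ∀ s : Finset (Fin m), ∃ φ : ℕ → ℕ, StrictMono φ ∧
      ∀ i ∈ s, ∃ l, Tendsto (fun k => u (φ k) i) atTop (𝓝 l) by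
    obtain ⟨φ, h1, h2⟩ := h Finset.univ
    exact ⟨φ, h1, fun i => h2 i (Finset.mem_univ i)⟩
  intro s
  induction s using Finset.induction_on with
  | empty => exact ⟨id, strictMono_id, by simp⟩
  | @insert a s ha ih =>
    obtain ⟨φ, hφ, hs⟩ := ih
    obtain ⟨ψ, hψ, l, hl⟩ := exists_tendsto_subseq (fun k => u (φ k) a)
    refine ⟨φ ∘ ψ, hφ.comp hψ, ?_⟩
    intro i hi
    rcases Finset.mem_insert.1 hi with rfl | hi
    · exact ⟨l, hl⟩
    · obtain ⟨li, hli⟩ := hs i hi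
      exact ⟨li, hli.comp hψ.tendsto_atTop⟩


/-- The key uniform stabilization lemma: a continuous real function on `L₊ⁿ` varies by at most
`ε` when coordinates beyond some `a` are modified arbitrarily (beyond `a`). -/
lemma key {n : ℕ} (F : (Fin n → LongLinePlus) → ℝ) (hF : Continuous F) {ε : ℝ} (hε : 0 < ε) :
    ∃ a : LongLinePlus, ∀ x y : Fin n → LongLinePlus,
      (∀ i, x i ≠ y i → a ≤ x i ∧ a ≤ y i) → dist (F x) (F y) ≤ ε := by
  classical
  by_contra hcon
  push_neg at hcon
  choose X Y hXY hd using hcon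
  -- a strictly increasing sequence dominating all the chosen points
  have step : ∀ a : LongLinePlus, ∃ b, a < b ∧ ∀ i, X a i < b ∧ Y a i < b := by
    intro a
    set M : Finset LongLinePlus :=
      insert a (Finset.univ.image (X a) ∪ Finset.univ.image (Y a)) with hM
    have hMne : M.Nonempty := ⟨a, Finset.mem_insert_self _ _⟩
    obtain ⟨b, hb⟩ := exists_gt (M.max' hMne)
    refine ⟨b, lt_of_le_of_lt (Finset.le_max' M a (Finset.mem_insert_self _ _)) hb, fun i => ?_⟩
    constructor
    · refine lt_of_le_of_lt (Finset.le_max' M _ ?_) hb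
      exact Finset.mem_insert_of_mem (Finset.mem_union_left _
        (Finset.mem_image.2 ⟨i, Finset.mem_univ i, rfl⟩))
    · refine lt_of_le_of_lt (Finset.le_max' M _ ?_) hb
      exact Finset.mem_insert_of_mem (Finset.mem_union_right _
        (Finset.mem_image.2 ⟨i, Finset.mem_univ i, rfl⟩))
  choose nxt hnxt1 hnxt2 using step
  obtain ⟨a0⟩ := (inferInstance : Nonempty LongLinePlus)
  set A : ℕ → LongLinePlus := fun k => Nat.rec a0 (fun _ p => nxt p) k with hA
  have hAsucc : ∀ k, A (k+1) = nxt (A k) := fun k => rfl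
  have hAmono : StrictMono A := strictMono_nat_of_lt_succ (fun k => hnxt1 (A k))
  set x : ℕ → Fin n → LongLinePlus := fun k => X (A k) with hx
  set y : ℕ → Fin n → LongLinePlus := fun k => Y (A k) with hy
  -- extract a subsequence with constant "disagreement pattern"
  set Tset : ℕ → Finset (Fin n) := fun k => Finset.univ.filter (fun i => x k i ≠ y k i)
    with hTset
  obtain ⟨T0, hT0⟩ := Finite.exists_infinite_fiber Tset
  haveI : Infinite (Tset ⁻¹' {T0}) := hT0
  set φ0 : ℕ → ℕ := fun k => Nat.orderEmbeddingOfSet (Tset ⁻¹' {T0}) k with hφ0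
  have hφ0mono : StrictMono φ0 := (Nat.orderEmbeddingOfSet (Tset ⁻¹' {T0})).strictMono
  have hφ0mem : ∀ k, Tset (φ0 k) = T0 := by
    intro k
    have : φ0 k ∈ Tset ⁻¹' {T0} := by
      have := Set.mem_range_self (f := fun k => Nat.orderEmbeddingOfSet (Tset ⁻¹' {T0}) k) k
      rwa [show Set.range (fun k => Nat.orderEmbeddingOfSet (Tset ⁻¹' {T0}) k)
        = Tset ⁻¹' {T0} from Nat.orderEmbeddingOfSet_range _] at this
    simpa using this
  -- extract coordinatewise convergent subsequences
  obtain ⟨φ1, hφ1, hx1⟩ := exists_tendsto_subseq_pi (fun k => x (φ0 k))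
  obtain ⟨φ2, hφ2, hy2⟩ := exists_tendsto_subseq_pi (fun k => y (φ0 (φ1 k)))
  choose xs hxs using fun i : Fin n => (hx1 i)
  choose ys hys using fun i : Fin n => (hy2 i)
  set ρ : ℕ → ℕ := fun k => φ0 (φ1 (φ2 k)) with hρ
  have hρmono : StrictMono ρ := hφ0mono.comp (hφ1.comp hφ2)
  have hxρ : ∀ i, Tendsto (fun k => x (ρ k) i) atTop (𝓝 (xs i)) :=
    fun i => (hxs i).comp hφ2.tendsto_atTop
  have hyρ : ∀ i, Tendsto (fun k => y (ρ k) i) atTop (𝓝 (ys i)) := fun i => hys i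
  -- limit of the sequence A
  obtain ⟨bA, hbA⟩ := countable_bddAbove A
  obtain ⟨L0, hL0⟩ := exists_isLUB (Set.range_nonempty A)
    ⟨bA, by rintro z ⟨k, rfl⟩; exact (hbA k).le⟩
  have hAten : Tendsto A atTop (𝓝 L0) := tendsto_atTop_isLUB hAmono.monotone hL0
  have hA1 : Tendsto (fun k => A (ρ k)) atTop (𝓝 L0) := hAten.comp hρmono.tendsto_atTop
  have hρ1 : StrictMono (fun k => ρ k + 1) := fun a b hab => Nat.succ_lt_succ (hρmono hab)
  have hA2 : Tendsto (fun k => A (ρ k + 1)) atTop (𝓝 L0) := hAten.comp hρ1.tendsto_atTop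
  -- the two limits coincide
  have hlim : xs = ys := by
    funext i
    by_cases hi : i ∈ T0
    · have hne : ∀ k, x (ρ k) i ≠ y (ρ k) i := by
        intro k
        have := hφ0mem (φ1 (φ2 k))
        have hiT : i ∈ Tset (ρ k) := by rw [hρ]; rw [this]; exact hi
        simpa [hTset] using (Finset.mem_filter.1 hiT).2
      have hxb : ∀ k, A (ρ k) ≤ x (ρ k) i ∧ A (ρ k) ≤ y (ρ k) i :=
        fun k => hXY (A (ρ k)) i (hne k)
      have hxu : ∀ k, x (ρ k) i ≤ A (ρ k + 1) := by
        intro k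
        rw [hAsucc (ρ k)]
        exact ((hnxt2 (A (ρ k)) i).1).le
      have hyu : ∀ k, y (ρ k) i ≤ A (ρ k + 1) := by
        intro k
        rw [hAsucc (ρ k)]
        exact ((hnxt2 (A (ρ k)) i).2).le
      have h1 : Tendsto (fun k => x (ρ k) i) atTop (𝓝 L0) :=
        tendsto_of_tendsto_of_tendsto_of_le_of_le hA1 hA2 (fun k => (hxb k).1) hxu
      have h2 : Tendsto (fun k => y (ρ k) i) atTop (𝓝 L0) :=
        tendsto_of_tendsto_of_tendsto_of_le_of_le hA1 hA2 (fun k => (hxb k).2) hyu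
      rw [tendsto_nhds_unique (hxρ i) h1, tendsto_nhds_unique (hyρ i) h2]
    · have heq : ∀ k, x (ρ k) i = y (ρ k) i := by
        intro k
        have := hφ0mem (φ1 (φ2 k))
        by_contra hne
        have hiT : i ∈ Tset (ρ k) := by
          rw [hρ]
          exact Finset.mem_filter.2 ⟨Finset.mem_univ i, hne⟩
        rw [hρ] at hiT
        rw [this] at hiT
        exact hi hiT
      have : Tendsto (fun k => x (ρ k) i) atTop (𝓝 (ys i)) := by
        have := hyρ i
        simpa [funext heq] using this
      exact tendsto_nhds_unique (hxρ i) this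
  -- contradiction with continuity
  have hFx : Tendsto (fun k => F (x (ρ k))) atTop (𝓝 (F xs)) :=
    (hF.tendsto xs).comp (tendsto_pi_nhds.2 hxρ)
  have hFy : Tendsto (fun k => F (y (ρ k))) atTop (𝓝 (F xs)) := by
    rw [hlim]
    exact (hF.tendsto ys).comp (tendsto_pi_nhds.2 hyρ)
  have hdist : Tendsto (fun k => dist (F (x (ρ k))) (F (y (ρ k)))) atTop (𝓝 0) := by
    simpa using hFx.dist hFy
  have : ε ≤ 0 := ge_of_tendsto hdist (Filter.Eventually.of_forall fun k => (hd (A (ρ k))).le)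
  exact absurd this (not_le.2 hε)


lemma toBar_strictMono : StrictMono LongLinePlus.toBar := fun _ _ h =>
  WithTop.coe_lt_coe.2 h

lemma range_toBar : Set.range LongLinePlus.toBar = Set.Iio (⊤ : LongLinePlusBar) :=
  WithTop.range_coe

lemma toBar_isOpenEmbedding : IsOpenEmbedding LongLinePlus.toBar := by
  have hrange : Set.range LongLinePlus.toBar = Set.Iio (⊤ : LongLinePlusBar) := range_toBar
  have hconn : (Set.range LongLinePlus.toBar).OrdConnected := by
    rw [hrange]; exact Set.ordConnected_Iio
  refine ⟨toBar_strictMono.isEmbedding_of_ordConnected hconn, ?_⟩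
  rw [hrange]; exact isOpen_Iio

instance : Nontrivial LongLinePlusBar := by
  obtain ⟨a⟩ := (inferInstance : Nonempty LongLinePlus)
  exact ⟨a.toBar, ⊤, WithTop.coe_ne_top⟩

lemma denseRange_toBar : DenseRange LongLinePlus.toBar := by
  intro z
  induction z using WithTop.recTopCoe with
  | top =>
    show (⊤ : LongLinePlusBar) ∈ _
    rw [mem_closure_iff_nhds_basis nhds_top_basis]
    intro a ha
    obtain ⟨v, hv⟩ := WithTop.ne_top_iff_exists.1 ha.ne
    obtain ⟨b, hb⟩ := exists_gt v
    exact ⟨LongLinePlus.toBar b, Set.mem_range_self b, by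
      rw [Set.mem_Ioi, ← hv]; exact WithTop.coe_lt_coe.2 hb⟩
  | coe a => exact subset_closure (Set.mem_range_self a)

lemma dense_range_pi (n : ℕ) :
    Dense (Set.range (fun (x : Fin n → LongLinePlus) => fun i => (x i).toBar)) := by
  have h1 : Set.range (fun (x : Fin n → LongLinePlus) => fun i => (x i).toBar)
      = Set.pi Set.univ (fun _ : Fin n => Set.range LongLinePlus.toBar) := by
    ext z
    constructor
    · rintro ⟨x, rfl⟩ i _
      exact Set.mem_range_self _
    · intro hz
      choose x hx using fun i => hz i (Set.mem_univ i)
      exact ⟨x, funext hx⟩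
  rw [h1]
  exact dense_pi Set.univ (fun i _ => denseRange_toBar)


end StoneCechAux

/-- For `n ≥ 1`, `L̄₊ⁿ` is the Stone–Čech compactification of `L₊ⁿ`: every continuous
map `f : L₊ⁿ → [0,1]` extends uniquely to a continuous map `L̄₊ⁿ → [0,1]`. -/
theorem longLinePlusBar_pow_is_stoneCech (n : ℕ) (hn : 1 ≤ n)
    (f : (Fin n → LongLinePlus) → Set.Icc (0:ℝ) 1) (hf : Continuous f) :
    ∃! g : (Fin n → LongLinePlusBar) → Set.Icc (0:ℝ) 1,
      Continuous g ∧ ∀ x : Fin n → LongLinePlus, g (fun i => (x i).toBar) = f x := by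
  classical
  set F : (Fin n → LongLinePlus) → ℝ := fun x => (f x : ℝ) with hFdef
  have hFcont : Continuous F := continuous_subtype_val.comp hf
  have hFmem : ∀ x, F x ∈ Set.Icc (0:ℝ) 1 := fun x => (f x).2
  -- stabilization witnesses
  have hkey : ∀ m : ℕ, ∃ a, ∀ x y : Fin n → LongLinePlus,
      (∀ i, x i ≠ y i → a ≤ x i ∧ a ≤ y i) → dist (F x) (F y) ≤ 1/((m:ℝ)+1) :=
    fun m => StoneCechAux.key F hFcont (by positivity)
  choose α hα using hkey
  -- a monotone sequence of witnesses
  set A : ℕ → LongLinePlus := fun m => Nat.rec (α 0) (fun m p => max p (α (m+1))) m with hA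
  have hAsucc : ∀ m, A (m+1) = max (A m) (α (m+1)) := fun _ => rfl
  have hAmono : Monotone A :=
    monotone_nat_of_le_succ (fun m => by rw [hAsucc]; exact le_max_left _ _)
  have hαA : ∀ m, α m ≤ A m := by
    intro m
    cases m with
    | zero => exact le_refl _
    | succ m => rw [hAsucc]; exact le_max_right _ _
  -- replacing the coordinates at Ω by a point of L₊
  set r : (Fin n → LongLinePlusBar) → LongLinePlus → (Fin n → LongLinePlus) :=
    fun z a i => WithTop.untopD a (z i) with hrdef
  have hS : ∀ (m : ℕ) (z : Fin n → LongLinePlusBar) (a b : LongLinePlus), α m ≤ a → α m ≤ b →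
      dist (F (r z a)) (F (r z b)) ≤ 1/((m:ℝ)+1) := by
    intro m z a b ha hb
    apply hα m
    intro i hne
    by_cases hzi : z i = ⊤
    · constructor
      · show α m ≤ WithTop.untopD a (z i)
        rw [hzi]; exact ha
      · show α m ≤ WithTop.untopD b (z i)
        rw [hzi]; exact hb
    · exfalso
      apply hne
      obtain ⟨v, hv⟩ := WithTop.ne_top_iff_exists.1 hzi
      show WithTop.untopD a (z i) = WithTop.untopD b (z i)
      rw [← hv, WithTop.untopD_coe, WithTop.untopD_coe]
  have hCauchy : ∀ z, CauchySeq (fun k => F (r z (A k))) := by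
    intro z
    rw [Metric.cauchySeq_iff]
    intro ε hε
    obtain ⟨m, hm⟩ := exists_nat_one_div_lt hε
    refine ⟨m, fun k hk l hl => lt_of_le_of_lt ?_ hm⟩
    have := hS m z (A k) (A l) ((hαA m).trans (hAmono hk)) ((hαA m).trans (hAmono hl))
    calc dist (F (r z (A k))) (F (r z (A l))) ≤ 1/((m:ℝ)+1) := this
    _ = 1/((m:ℝ)+1) := rfl
  have hGex : ∀ z, ∃ l, Tendsto (fun k => F (r z (A k))) atTop (𝓝 l) :=
    fun z => cauchySeq_tendsto_of_complete (hCauchy z)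
  choose G hGten using hGex
  have hGmem : ∀ z, G z ∈ Set.Icc (0:ℝ) 1 := fun z =>
    isClosed_Icc.mem_of_tendsto (hGten z) (Filter.Eventually.of_forall fun k => hFmem _)
  -- the extension property
  have hGext : ∀ x : Fin n → LongLinePlus, G (fun i => (x i).toBar) = F x := by
    intro x
    have hrx : ∀ k, r (fun i => (x i).toBar) (A k) = x := by
      intro k
      funext i
      show WithTop.untopD (A k) ((x i).toBar) = x i
      exact WithTop.untopD_coe _ _
    have h1 : Tendsto (fun k => F (r (fun i => (x i).toBar) (A k))) atTop (𝓝 (F x)) := by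
      have : (fun k => F (r (fun i => (x i).toBar) (A k))) = fun _ => F x := by
        funext k; rw [hrx k]
      rw [this]
      exact tendsto_const_nhds
    exact tendsto_nhds_unique (hGten _) h1
  -- the uniform estimate
  have hE : ∀ (m : ℕ) (z : Fin n → LongLinePlusBar) (a : LongLinePlus), α m ≤ a →
      dist (G z) (F (r z a)) ≤ 1/((m:ℝ)+1) := by
    intro m z a ha
    have hten : Tendsto (fun k => dist (F (r z (A k))) (F (r z a))) atTop
        (𝓝 (dist (G z) (F (r z a)))) := (hGten z).dist tendsto_const_nhds
    refine le_of_tendsto hten ?_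
    filter_upwards [eventually_ge_atTop m] with k hk
    exact hS m z (A k) a ((hαA m).trans (hAmono hk)) ha
  -- continuity of the extension
  have hGcont : Continuous G := by
    rw [continuous_iff_continuousAt]
    intro z0
    rw [ContinuousAt, Metric.tendsto_nhds]
    intro ε hε
    obtain ⟨m, hm⟩ := exists_nat_one_div_lt (show (0:ℝ) < ε/4 by positivity)
    set a0 := α m with ha0
    set yhat := r z0 a0 with hyhat
    have hFc : Tendsto F (𝓝 yhat) (𝓝 (F yhat)) := hFcont.tendsto yhat
    have hmem : {w | dist (F w) (F yhat) < ε/4} ∈ 𝓝 yhat :=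
      Metric.tendsto_nhds.1 hFc _ (by positivity)
    rw [nhds_pi] at hmem
    obtain ⟨I, hIfin, t, ht, hsub⟩ := Filter.mem_pi.1 hmem
    have hsub' : Set.pi Set.univ t ⊆ {w | dist (F w) (F yhat) < ε/4} :=
      fun w hw => hsub (fun i _ => hw i (Set.mem_univ i))
    set W : Fin n → Set LongLinePlusBar := fun i =>
      if z0 i = ⊤ then Set.Ioi (LongLinePlus.toBar a0) else LongLinePlus.toBar '' (t i) with hW
    have hWnhds : ∀ i, W i ∈ 𝓝 (z0 i) := by
      intro i
      by_cases hzi : z0 i = ⊤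
      · rw [hW]
        simp only [hzi, if_true]
        exact isOpen_Ioi.mem_nhds (WithTop.coe_lt_top a0)
      · obtain ⟨v, hv⟩ := WithTop.ne_top_iff_exists.1 hzi
        have hyv : yhat i = v := by
          rw [hyhat]
          show WithTop.untopD a0 (z0 i) = v
          rw [← hv, WithTop.untopD_coe]
        rw [hW]
        simp only [hzi, if_false]
        rw [← hv]
        show _ ∈ 𝓝 (LongLinePlus.toBar v)
        rw [← StoneCechAux.toBar_isOpenEmbedding.map_nhds_eq v]
        refine Filter.image_mem_map ?_
        rw [← hyv]
        exact ht i
    filter_upwards [set_pi_mem_nhds Set.finite_univ (fun i _ => hWnhds i)] with z hz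
    -- the comparison point
    set w : Fin n → LongLinePlus := fun i =>
      if z0 i = ⊤ then a0 else WithTop.untopD a0 (z i) with hwdef
    have hwt : w ∈ Set.pi Set.univ t := by
      intro i _
      by_cases hzi : z0 i = ⊤
      · have : w i = yhat i := by
          rw [hwdef]
          simp only [hzi, if_true]
          rw [hyhat]
          show a0 = WithTop.untopD a0 (z0 i)
          rw [hzi]; rfl
        rw [this]
        exact mem_of_mem_nhds (ht i)
      · have hzW := hz i (Set.mem_univ i)
        rw [hW] at hzW
        simp only [hzi, if_false] at hzW
        obtain ⟨v, hvt, hveq⟩ := hzW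
        have : w i = v := by
          rw [hwdef]
          simp only [hzi, if_false]
          rw [← hveq]
          exact WithTop.untopD_coe _ _
        rw [this]
        exact hvt
    have hc1 : dist (F w) (F yhat) < ε/4 := hsub' hwt
    have hc2 : dist (G z) (F (r z a0)) ≤ 1/((m:ℝ)+1) := hE m z a0 le_rfl
    have hc4 : dist (G z0) (F yhat) ≤ 1/((m:ℝ)+1) := hE m z0 a0 le_rfl
    have hc3 : dist (F (r z a0)) (F w) ≤ 1/((m:ℝ)+1) := by
      apply hα m
      intro i hne
      by_cases hzi : z0 i = ⊤
      · constructor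
        · show a0 ≤ WithTop.untopD a0 (z i)
          by_cases hz2 : z i = ⊤
          · rw [hz2]; exact le_rfl
          · obtain ⟨v, hv⟩ := WithTop.ne_top_iff_exists.1 hz2
            rw [← hv, WithTop.untopD_coe]
            have hzW := hz i (Set.mem_univ i)
            rw [hW] at hzW
            simp only [hzi, if_true] at hzW
            rw [← hv] at hzW
            exact (WithTop.coe_lt_coe.1 hzW).le
        · show a0 ≤ w i
          rw [hwdef]
          simp only [hzi, if_true]
          exact le_rfl
      · exfalso
        apply hne
        show WithTop.untopD a0 (z i) = w i
        rw [hwdef]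
        simp only [hzi, if_false]
    have hd1 : dist (G z) (F w) ≤ dist (G z) (F (r z a0)) + dist (F (r z a0)) (F w) :=
      dist_triangle _ _ _
    have hd2 : dist (G z) (G z0) ≤ dist (G z) (F w) + dist (F w) (F yhat)
        + dist (F yhat) (G z0) := dist_triangle4 _ _ _ _
    have hc4' : dist (F yhat) (G z0) ≤ 1/((m:ℝ)+1) := by rw [dist_comm]; exact hc4
    calc dist (G z) (G z0)
        ≤ (dist (G z) (F (r z a0)) + dist (F (r z a0)) (F w)) + dist (F w) (F yhat)
          + dist (F yhat) (G z0) := by linarith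
      _ < ε := by
          have h14 : 1/((m:ℝ)+1) < ε/4 := hm
          linarith
  -- assemble
  refine ⟨fun z => ⟨G z, hGmem z⟩, ⟨?_, ?_⟩, ?_⟩
  · exact hGcont.subtype_mk _
  · intro x
    exact Subtype.ext (hGext x)
  · rintro g' ⟨hg'cont, hg'ext⟩
    apply Continuous.ext_on (StoneCechAux.dense_range_pi n) hg'cont (hGcont.subtype_mk _)
    rintro _ ⟨x, rfl⟩
    rw [hg'ext x]
    exact (Subtype.ext (hGext x)).symm
end

section
/- Every continuous function h : L̄₊ⁿ → [0,1] is constant on some neighbourhood of the point ₙ = (Ω, …, Ω): there exists λ < Ω such that h is constant on (λ, Ω]ⁿ. -/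
/-! ### Auxiliary material -/

/-- View an element of `SOmega` as an ordinal. -/
def SOmega.toOrd (x : SOmega) : Ordinal :=
  ((show Set.Iio (Cardinal.aleph 1).ord from x) : Set.Iio (Cardinal.aleph 1).ord).1

lemma SOmega.toOrd_lt (x : SOmega) : x.toOrd < (Cardinal.aleph 1).ord :=
  ((show Set.Iio (Cardinal.aleph 1).ord from x) : Set.Iio (Cardinal.aleph 1).ord).2

/-- Build an element of `SOmega` from an ordinal below `ω₁`. -/
def SOmega.mk (o : Ordinal) (ho : o < (Cardinal.aleph 1).ord) : SOmega :=
  show Set.Iio (Cardinal.aleph 1).ord from ⟨o, ho⟩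

lemma SOmega.lt_iff_toOrd {x y : SOmega} : x < y ↔ x.toOrd < y.toOrd := Iff.rfl

lemma aleph_one_ord_pos : (0 : Ordinal) < (Cardinal.aleph 1).ord :=
  (Cardinal.isSuccLimit_ord (Cardinal.aleph0_le_aleph 1)).pos

/-- A base point of `L₊`. -/
noncomputable def llpZero : LongLinePlus :=
  show SOmega ×ₗ (Set.Ico (0:ℝ) 1) from
    toLex (SOmega.mk 0 aleph_one_ord_pos, ⟨0, by constructor <;> norm_num⟩)

noncomputable instance : Nonempty LongLinePlus := ⟨llpZero⟩

/-- First coordinate of a point of `L₊`. -/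
def LongLinePlus.fst (x : LongLinePlus) : SOmega :=
  (ofLex (show SOmega ×ₗ (Set.Ico (0:ℝ) 1) from x)).1

/-- Any countable sequence in `L₊` is bounded above. -/
lemma LongLinePlus.exists_ub (f : ℕ → LongLinePlus) : ∃ lam, ∀ k, f k ≤ lam := by
  set g : ℕ → Ordinal := fun k => Order.succ (f k).fst.toOrd with hg
  have hlt : iSup g < (Cardinal.aleph 1).ord := by
    apply Cardinal.iSup_lt_ord_lift_of_isRegular Cardinal.isRegular_aleph_one
    · simpa using Cardinal.aleph0_lt_aleph_one
    · intro k
      exact (Cardinal.isSuccLimit_ord (Cardinal.aleph0_le_aleph 1)).succ_lt (f k).fst.toOrd_lt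
  refine ⟨show SOmega ×ₗ (Set.Ico (0:ℝ) 1) from
    toLex (SOmega.mk (iSup g) hlt, ⟨0, by constructor <;> norm_num⟩), fun k => le_of_lt ?_⟩
  have h1 : (f k).fst < SOmega.mk (iSup g) hlt := by
    rw [SOmega.lt_iff_toOrd]
    exact lt_of_lt_of_le (Order.lt_succ _) (Ordinal.le_iSup g k)
  show (show SOmega ×ₗ (Set.Ico (0:ℝ) 1) from f k) <
      toLex (SOmega.mk (iSup g) hlt, ⟨0, by constructor <;> norm_num⟩)
  exact (Prod.Lex.lt_iff).mpr (Or.inl h1)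

/-- Any neighbourhood of `Ω` in `L̄₊` contains a tail `(λ, Ω]`. -/
lemma exists_tail_subset_of_mem_nhds_top {s : Set LongLinePlusBar} (hs : s ∈ nhds ⊤) :
    ∃ lam : LongLinePlus, ∀ x, lam.toBar < x → x ∈ s := by
  obtain ⟨l, hl, hsub⟩ := exists_Ioc_subset_of_mem_nhds hs
    ⟨llpZero.toBar, show (llpZero : WithTop LongLinePlus) < ⊤ from WithTop.coe_lt_top _⟩
  obtain ⟨lam, rfl⟩ := WithTop.ne_top_iff_exists.mp hl.ne |>.imp (fun a ha => ha)
  exact ⟨lam, fun x hx => hsub ⟨hx, le_top⟩⟩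

/-- Every continuous `h : L̄₊ⁿ → [0,1]` is constant on a neighbourhood `(λ, Ω]ⁿ` of
`(Ω, …, Ω)` for some `λ < Ω`. -/
theorem longLinePlusBar_pow_constant_near_top (n : ℕ)
    (h : (Fin n → LongLinePlusBar) → Set.Icc (0:ℝ) 1) (hh : Continuous h) :
    ∃ lam : LongLinePlus, ∀ x y : Fin n → LongLinePlusBar,
      (∀ i, lam.toBar < x i) → (∀ i, lam.toBar < y i) → h x = h y := by
  set T : Fin n → LongLinePlusBar := fun _ => ⊤ with hT
  have key : ∀ k : ℕ, ∃ lam : LongLinePlus, ∀ x : Fin n → LongLinePlusBar,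
      (∀ i, lam.toBar < x i) → dist (h x) (h T) < 1/(k+1) := by
    intro k
    have hk : (0:ℝ) < 1/(k+1) := by positivity
    have hmem : {x : Fin n → LongLinePlusBar | dist (h x) (h T) < 1/(k+1)} ∈ nhds T :=
      (hh.tendsto T) (Metric.ball_mem_nhds _ hk)
    rw [nhds_pi, Filter.mem_pi] at hmem
    obtain ⟨I, _, t, ht, hsub⟩ := hmem
    choose lamf hlamf using fun i => exists_tail_subset_of_mem_nhds_top (ht i)
    obtain ⟨lam, hlam⟩ := Finite.exists_le lamf
    refine ⟨lam, fun x hx => hsub fun i _ => hlamf i (x i) (lt_of_le_of_lt ?_ (hx i))⟩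
    exact WithTop.coe_le_coe.mpr (hlam i)
  choose lamk hlamk using key
  obtain ⟨lam, hlam⟩ := LongLinePlus.exists_ub lamk
  have hconst : ∀ x : Fin n → LongLinePlusBar, (∀ i, lam.toBar < x i) → h x = h T := by
    intro x hx
    apply eq_of_forall_dist_le
    intro ε hε
    obtain ⟨k, hk⟩ := exists_nat_one_div_lt hε
    refine le_of_lt (lt_trans (hlamk k x fun i => lt_of_le_of_lt ?_ (hx i)) hk)
    exact WithTop.coe_le_coe.mpr (hlam k)
  exact ⟨lam, fun x y hx hy => (hconst x hx).trans (hconst y hy).symm⟩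
end

section
/- Every homeomorphism f : L₊ → L₊ of the half-open long line with f of finite order in the group of homeomorphisms (fᵏ = id for some k ≥ 1) is the identity; equivalently, the homeomorphism group of L₊ is torsion-free. -/
/- ### Auxiliary material -/

open Set Function

lemma omega1_isLimit : Order.IsSuccLimit (Cardinal.aleph 1).ord :=
  Cardinal.isSuccLimit_ord (Cardinal.aleph0_le_aleph 1)

instance : Inhabited (Set.Iio (Cardinal.aleph 1).ord) := ⟨⟨0, omega1_isLimit.pos⟩⟩
instance : Set.OrdConnected (Set.Iio (Cardinal.aleph 1).ord) := Set.ordConnected_Iio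
instance : Inhabited (Set.Ico (0:ℝ) 1) := ⟨⟨0, le_refl 0, one_pos⟩⟩
instance : Set.OrdConnected (Set.Ico (0:ℝ) 1) := Set.ordConnected_Ico

noncomputable instance : ConditionallyCompleteLinearOrder SOmega :=
  inferInstanceAs (ConditionallyCompleteLinearOrder (Set.Iio (Cardinal.aleph 1).ord))
instance : WellFoundedLT SOmega :=
  inferInstanceAs (WellFoundedLT (Set.Iio (Cardinal.aleph 1).ord))
instance : Inhabited SOmega :=
  inferInstanceAs (Inhabited (Set.Iio (Cardinal.aleph 1).ord))

abbrev I01 : Type := ↥(Set.Ico (0:ℝ) 1)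

instance : NoMaxOrder I01 :=
  ⟨fun u => ⟨⟨(u.1 + 1) / 2, by constructor <;> [linarith [u.2.1]; linarith [u.2.2]]⟩,
    by have := u.2.2; exact Subtype.mk_lt_mk.mpr (by linarith)⟩⟩

lemma I01_default_le (u : I01) : (default : I01) ≤ u := u.2.1

lemma SOmega_default_le (a : SOmega) : (default : SOmega) ≤ a := zero_le (a := a.1)

/-- successor inside `SOmega` -/
noncomputable def ssucc (a : SOmega) : SOmega := ⟨Order.succ a.1, omega1_isLimit.succ_lt a.2⟩

lemma lt_ssucc (a : SOmega) : a < ssucc a := Subtype.mk_lt_mk.mpr (Order.lt_succ a.1)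

lemma ssucc_le {a b : SOmega} (h : a < b) : ssucc a ≤ b :=
  Subtype.mk_le_mk.mpr (Order.succ_le_of_lt h)

/- ### coordinates on `LongLinePlus` -/

def mk2 (a : SOmega) (t : I01) : LongLinePlus := toLex (a, t)

def π1 (p : LongLinePlus) : SOmega := (ofLex p).1
def π2 (p : LongLinePlus) : I01 := (ofLex p).2

@[simp] lemma π1_mk2 (a t) : π1 (mk2 a t) = a := rfl
@[simp] lemma π2_mk2 (a t) : π2 (mk2 a t) = t := rfl
@[simp] lemma mk2_eta (p : LongLinePlus) : mk2 (π1 p) (π2 p) = p := rfl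

lemma ll_lt_iff {p q : LongLinePlus} :
    p < q ↔ π1 p < π1 q ∨ (π1 p = π1 q ∧ π2 p < π2 q) :=
  Prod.Lex.lt_iff (x := p) (y := q)

lemma ll_le_iff {p q : LongLinePlus} :
    p ≤ q ↔ π1 p < π1 q ∨ (π1 p = π1 q ∧ π2 p ≤ π2 q) :=
  Prod.Lex.le_iff (x := p) (y := q)

lemma π1_mono {p q : LongLinePlus} (h : p ≤ q) : π1 p ≤ π1 q :=
  Prod.Lex.monotone_fst p q h

def lbot : LongLinePlus := mk2 default default

lemma lbot_le (p : LongLinePlus) : lbot ≤ p := by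
  rcases lt_or_eq_of_le (SOmega_default_le (π1 p)) with h | h
  · exact ll_le_iff.mpr (Or.inl h)
  · exact ll_le_iff.mpr (Or.inr ⟨h, I01_default_le _⟩)

instance inst_s11 : Nonempty LongLinePlus := ⟨lbot⟩

instance : NoMaxOrder LongLinePlus :=
  ⟨fun p => ⟨mk2 (ssucc (π1 p)) default, ll_lt_iff.mpr (Or.inl (lt_ssucc _))⟩⟩

instance : DenselyOrdered LongLinePlus := by
  constructor
  intro p q h
  rcases ll_lt_iff.mp h with h1 | ⟨h1, h2⟩
  · obtain ⟨u, hu⟩ := exists_gt (π2 p)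
    exact ⟨mk2 (π1 p) u, ll_lt_iff.mpr (Or.inr ⟨rfl, hu⟩), ll_lt_iff.mpr (Or.inl h1)⟩
  · obtain ⟨u, hu1, hu2⟩ := exists_between h2
    exact ⟨mk2 (π1 p) u, ll_lt_iff.mpr (Or.inr ⟨rfl, hu1⟩),
      ll_lt_iff.mpr (Or.inr ⟨h1, hu2⟩)⟩

/- ### conditional completeness -/

noncomputable def lA (s : Set LongLinePlus) : SOmega := sSup (π1 '' s)
noncomputable def lB (s : Set LongLinePlus) : SOmega := sInf (π1 '' s)
def lT (s : Set LongLinePlus) (a : SOmega) : Set I01 := {u | mk2 a u ∈ s}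

open Classical in
noncomputable def lsup (s : Set LongLinePlus) : LongLinePlus :=
  if s.Nonempty ∧ BddAbove s then
    if (lT s (lA s)).Nonempty then
      if BddAbove (lT s (lA s)) then mk2 (lA s) (sSup (lT s (lA s)))
      else mk2 (ssucc (lA s)) default
    else mk2 (lA s) default
  else lbot

open Classical in
noncomputable def linf (s : Set LongLinePlus) : LongLinePlus :=
  if s.Nonempty then mk2 (lB s) (sInf (lT s (lB s))) else lbot

lemma bddAbove_π1 {s : Set LongLinePlus} (hb : BddAbove s) : BddAbove (π1 '' s) := by
  obtain ⟨b, hb⟩ := hb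
  exact ⟨π1 b, by rintro _ ⟨p, hp, rfl⟩; exact π1_mono (hb hp)⟩

lemma bddBelow_I01 (T : Set I01) : BddBelow T := ⟨default, fun u _ => I01_default_le u⟩

lemma π1_le_lA {s : Set LongLinePlus} (hb : BddAbove s) {x : LongLinePlus} (hx : x ∈ s) :
    π1 x ≤ lA s := le_csSup (bddAbove_π1 hb) ⟨x, hx, rfl⟩

lemma mem_lT_of_π1_eq {s : Set LongLinePlus} {x : LongLinePlus} (hx : x ∈ s) {a : SOmega}
    (h : π1 x = a) : π2 x ∈ lT s a := by
  have : mk2 a (π2 x) = x := by rw [← h]; exact mk2_eta x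
  simpa [lT, this] using hx

lemma le_lsup {s : Set LongLinePlus} (x : LongLinePlus) (hb : BddAbove s) (hx : x ∈ s) :
    x ≤ lsup s := by
  have hcond : s.Nonempty ∧ BddAbove s := ⟨⟨x, hx⟩, hb⟩
  have hπ : π1 x ≤ lA s := π1_le_lA hb hx
  rw [lsup, if_pos hcond]
  by_cases hT : (lT s (lA s)).Nonempty
  · rw [if_pos hT]
    by_cases hB : BddAbove (lT s (lA s))
    · rw [if_pos hB]
      rcases lt_or_eq_of_le hπ with h | h
      · exact ll_le_iff.mpr (Or.inl h)
      · exact ll_le_iff.mpr (Or.inr ⟨h, le_csSup hB (mem_lT_of_π1_eq hx h)⟩)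
    · rw [if_neg hB]
      exact ll_le_iff.mpr (Or.inl (lt_of_le_of_lt hπ (lt_ssucc _)))
  · rw [if_neg hT]
    rcases lt_or_eq_of_le hπ with h | h
    · exact ll_le_iff.mpr (Or.inl h)
    · exact absurd (mem_lT_of_π1_eq hx h) (fun hm => hT ⟨π2 x, hm⟩)

lemma ub_lT {s : Set LongLinePlus} {b : LongLinePlus} (hb : b ∈ upperBounds s)
    (h : lA s = π1 b) : π2 b ∈ upperBounds (lT s (lA s)) := by
  intro u hu
  have hle : mk2 (lA s) u ≤ b := hb hu
  rcases ll_le_iff.mp hle with h' | ⟨_, h'⟩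
  · rw [π1_mk2, h] at h'; exact absurd h' (lt_irrefl _)
  · simpa using h'

lemma lsup_le {s : Set LongLinePlus} (b : LongLinePlus) (hs : s.Nonempty)
    (hb : b ∈ upperBounds s) : lsup s ≤ b := by
  have hcond : s.Nonempty ∧ BddAbove s := ⟨hs, ⟨b, hb⟩⟩
  have hπ : lA s ≤ π1 b :=
    csSup_le (hs.image _) (by rintro _ ⟨p, hp, rfl⟩; exact π1_mono (hb hp))
  rw [lsup, if_pos hcond]
  by_cases hT : (lT s (lA s)).Nonempty
  · rw [if_pos hT]
    by_cases hB : BddAbove (lT s (lA s))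
    · rw [if_pos hB]
      rcases lt_or_eq_of_le hπ with h | h
      · exact ll_le_iff.mpr (Or.inl h)
      · exact ll_le_iff.mpr (Or.inr ⟨h, csSup_le hT (ub_lT hb h)⟩)
    · rw [if_neg hB]
      rcases lt_or_eq_of_le hπ with h | h
      · rcases lt_or_eq_of_le (ssucc_le h) with h' | h'
        · exact ll_le_iff.mpr (Or.inl h')
        · exact ll_le_iff.mpr (Or.inr ⟨h', I01_default_le _⟩)
      · exact absurd ⟨π2 b, ub_lT hb h⟩ hB
  · rw [if_neg hT]
    rcases lt_or_eq_of_le hπ with h | h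
    · exact ll_le_iff.mpr (Or.inl h)
    · exact ll_le_iff.mpr (Or.inr ⟨h, I01_default_le _⟩)

lemma lT_lB_nonempty {s : Set LongLinePlus} (hs : s.Nonempty) : (lT s (lB s)).Nonempty := by
  have hA : (π1 '' s).Nonempty := hs.image _
  obtain ⟨p, hp, he⟩ := csInf_mem hA
  exact ⟨π2 p, mem_lT_of_π1_eq hp he⟩

lemma linf_le {s : Set LongLinePlus} (x : LongLinePlus) (hx : x ∈ s) : linf s ≤ x := by
  have hs : s.Nonempty := ⟨x, hx⟩
  have hπ : lB s ≤ π1 x :=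
    csInf_le ⟨default, by rintro _ ⟨p, hp, rfl⟩; exact SOmega_default_le _⟩ ⟨x, hx, rfl⟩
  rw [linf, if_pos hs]
  rcases lt_or_eq_of_le hπ with h | h
  · exact ll_le_iff.mpr (Or.inl h)
  · exact ll_le_iff.mpr (Or.inr ⟨h, csInf_le (bddBelow_I01 _) (mem_lT_of_π1_eq hx h.symm)⟩)

lemma le_linf {s : Set LongLinePlus} (b : LongLinePlus) (hs : s.Nonempty)
    (hb : b ∈ lowerBounds s) : b ≤ linf s := by
  have hπ : π1 b ≤ lB s :=
    le_csInf (hs.image _) (by rintro _ ⟨p, hp, rfl⟩; exact π1_mono (hb hp))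
  rw [linf, if_pos hs]
  rcases lt_or_eq_of_le hπ with h | h
  · exact ll_le_iff.mpr (Or.inl h)
  · refine ll_le_iff.mpr (Or.inr ⟨h, le_csInf (lT_lB_nonempty hs) ?_⟩)
    intro u hu
    have hle : b ≤ mk2 (lB s) u := hb hu
    rcases ll_le_iff.mp hle with h' | ⟨_, h'⟩
    · rw [π1_mk2, ← h] at h'; exact absurd h' (lt_irrefl _)
    · simpa using h'

lemma lsup_junk {s : Set LongLinePlus} (hs : ¬BddAbove s) : lsup s = lsup ∅ := by
  rw [lsup, if_neg (by tauto), lsup, if_neg (by simp)]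

noncomputable instance : ConditionallyCompleteLinearOrder LongLinePlus :=
  { (inferInstance : Lattice LongLinePlus), (inferInstance : LinearOrder LongLinePlus) with
    sSup := lsup
    sInf := linf
    isLUB_csSup := fun _ hs hb => ⟨fun x hx => le_lsup x hb hx, fun b hb' => lsup_le b hs hb'⟩
    isGLB_csInf := fun _ hs _ => ⟨fun x hx => linf_le x hx, fun b hb => le_linf b hs hb⟩
    csSup_of_not_bddAbove := fun _ hs => lsup_junk hs
    csInf_of_not_bddBelow := fun s hs => absurd ⟨lbot, fun p _ => lbot_le p⟩ hs }

/-- Every finite-order homeomorphism of `L₊` is the identity; i.e. the homeomorphism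
group of `L₊` is torsion-free. -/
theorem longLinePlus_homeomorph_finite_order_eq_id (f : LongLinePlus ≃ₜ LongLinePlus)
    (hf : ∃ k : ℕ, 1 ≤ k ∧ ∀ x : LongLinePlus, (⇑f)^[k] x = x) :
    ∀ x : LongLinePlus, f x = x := by
  obtain ⟨k, hk1, hk⟩ := hf
  obtain ⟨m, rfl⟩ : ∃ m, k = m + 1 := ⟨k - 1, (Nat.succ_pred_eq_of_pos hk1).symm⟩
  rcases f.continuous.strictMono_of_inj f.injective with hm | ha
  · intro x
    by_contra hne
    rcases lt_or_gt_of_ne hne with h | h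
    · have : ∀ n, (⇑f)^[n + 1] x < x := by
        intro n
        induction n with
        | zero => simpa using h
        | succ n ih =>
          rw [Function.iterate_succ_apply']
          exact lt_trans (hm ih) h
      exact absurd (hk x) (ne_of_lt (this m))
    · have : ∀ n, x < (⇑f)^[n + 1] x := by
        intro n
        induction n with
        | zero => simpa using h
        | succ n ih =>
          rw [Function.iterate_succ_apply']
          exact lt_trans h (hm ih)
      exact absurd (hk x) (ne_of_gt (this m))
  · exfalso
    obtain ⟨z, hz⟩ := exists_gt (f lbot)
    obtain ⟨y, rfl⟩ := f.surjective z
    exact absurd (ha.antitone (lbot_le y)) (not_le.mpr hz)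
end
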